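/- arXiv:1208.1301 — 4 statements merged into one kernel-verified Lean document; each statement's English description precedes it below -/
import Mathlib

section
/- Let T be a complete first-order theory in a language L and suppose some formula φ(x̄,ȳ) has the order property, i.e. in some model M of T there exist tuples ā_i, b̄_i (for i < ω) such that M ⊨ φ(ā_i, b̄_j) if and only if i < j. Then for every infinite cardinal λ ≥ |L| there is a model M of T of cardinality λ such that the number of complete 1-types over M is strictly greater than λ; that is, T is unstable in every such λ. -/
open FirstOrder FirstOrder.Language Cardinal

universe u v w x

namespace OPWork

variable {L : FirstOrder.Language.{u, v}}


/-- Encoding of an `L`-formula with variables in `N ⊕ α` as a sentence of `L[[N]][[α]]`. -/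
noncomputable def enc {N : Type w} {α : Type x} (χ : L.Formula (N ⊕ α)) :
    (L[[N]])[[α]].Sentence :=
  Formula.equivSentence (BoundedFormula.constantsVarsEquiv.symm χ)

theorem enc_surjective {N : Type w} {α : Type x} :
    Function.Surjective (enc : L.Formula (N ⊕ α) → (L[[N]])[[α]].Sentence) := by
  intro σ
  exact ⟨BoundedFormula.constantsVarsEquiv (Formula.equivSentence.symm σ), by
    simp [enc]⟩

theorem realize_cVE_symm {N : Type w} {α : Type x} {M : Type*} [L.Structure M]
    [L[[N]].Structure M] [(L.lhomWithConstants N).IsExpansionOn M]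
    (χ : L.Formula (N ⊕ α)) (v : α → M) :
    Formula.Realize (BoundedFormula.constantsVarsEquiv.symm χ : L[[N]].Formula α) v ↔
      χ.Realize (Sum.elim (fun a => ((L.con a) : M)) v) := by
  rw [Formula.Realize, Formula.Realize]
  conv_rhs => rw [← Equiv.apply_symm_apply (BoundedFormula.constantsVarsEquiv) χ]
  exact BoundedFormula.realize_constantsVarsEquiv.symm

theorem enc_mem_typeOf {N : Type w} [L.Structure N] {α : Type x} {M : Type*} [L.Structure M]
    [L[[N]].Structure M] [(L.lhomWithConstants N).IsExpansionOn M] [Nonempty M]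
    [M ⊨ L.elementaryDiagram N] {v : α → M} {χ : L.Formula (N ⊕ α)} :
    enc χ ∈ (L.elementaryDiagram N).typeOf v ↔
      χ.Realize (Sum.elim (fun a => ((L.con a) : M)) v) := by
  rw [enc, Theory.CompleteType.formula_mem_typeOf, realize_cVE_symm]


/-- Compactness: if every finite subfamily of a family of formulas is realized by some
tuple in a fixed model of `T`, then there is a model of `T` with a tuple realizing
the whole family. -/
theorem exists_model_realize {T : L.Theory} {α : Type w} {ι : Type x}
    (f : ι → L.Formula α) (M₀ : Type*) [L.Structure M₀] [Nonempty M₀] [M₀ ⊨ T]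
    (hfin : ∀ s : Finset ι, ∃ v : α → M₀, ∀ i ∈ s, (f i).Realize v) :
    ∃ (M : Theory.ModelType.{u, v, max u v w} T) (v : α → M), ∀ i, (f i).Realize v := by
  classical
  let Ts : Finset ι → L[[α]].Theory := fun s =>
    (L.lhomWithConstants α).onTheory T ∪ (fun i => Formula.equivSentence (f i)) '' ↑s
  have hsat : Theory.IsSatisfiable (⋃ s, Ts s) := by
    rw [Theory.isSatisfiable_directed_union_iff]
    · intro s
      obtain ⟨v, hv⟩ := hfin s
      letI : (constantsOn α).Structure M₀ := constantsOn.structure v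
      haveI : M₀ ⊨ Ts s := by
        constructor
        intro σ hσ
        rcases hσ with hσ | ⟨i, hi, rfl⟩
        · obtain ⟨σ₀, hσ₀, rfl⟩ := hσ
          rw [LHom.realize_onSentence]
          exact Theory.realize_sentence_of_mem T hσ₀
        · rw [Formula.realize_equivSentence]
          have : (fun a => ((L.con a) : M₀)) = v := rfl
          rw [this]
          exact hv i (by simpa using hi)
      exact Theory.Model.isSatisfiable M₀
    · have hmono : Monotone Ts := by
        intro s t hst
        exact Set.union_subset_union_right _ (Set.image_mono (by exact_mod_cast hst))
      exact hmono.directed_le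
  let M' := hsat.some
  letI : L.Structure M' := (L.lhomWithConstants α).reduct M'
  haveI : (L.lhomWithConstants α).IsExpansionOn M' := LHom.isExpansionOn_reduct _ _
  have hsub : (L.lhomWithConstants α).onTheory T ⊆ ⋃ s, Ts s :=
    le_trans (Set.subset_union_left) (Set.subset_iUnion Ts ∅)
  refine ⟨(M'.subtheoryModel hsub).reduct (L.lhomWithConstants α),
    fun a => ((L.con a) : M'), fun i => ?_⟩
  have hmem : Formula.equivSentence (f i) ∈ ⋃ s, Ts s := by
    refine Set.mem_iUnion.2 ⟨{i}, Set.mem_union_right _ ⟨i, by simp, rfl⟩⟩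
  have : M' ⊨ Formula.equivSentence (f i) := Theory.realize_sentence_of_mem _ hmem
  rwa [Formula.realize_equivSentence] at this

/-- There is a linear order `J` of size at most `lam` with more than `lam` many
"cuts" (downward-closed nonempty subsets). -/
theorem exists_bad_order (lam : Cardinal.{u}) (hlam : ℵ₀ ≤ lam) :
    ∃ (J : Type u) (_ : LinearOrder J) (C : Type u) (S : C → Set J),
      #J ≤ lam ∧ Infinite J ∧ lam < #C ∧
      (∀ c, (S c).Nonempty) ∧
      (∀ c, ∀ x ∈ S c, ∀ y, y ≤ x → y ∈ S c) ∧
      Function.Injective S := by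
  classical
  set κ := sInf {c : Cardinal.{u} | lam < 2 ^ c} with hκdef
  have hκ1 : lam < 2 ^ κ :=
    csInf_mem (s := {c : Cardinal.{u} | lam < 2 ^ c}) ⟨lam, cantor lam⟩
  have hκlam : κ ≤ lam := csInf_le' (show lam ∈ {c : Cardinal.{u} | lam < 2 ^ c} from cantor lam)
  have hκ2 : ∀ c < κ, 2 ^ c ≤ lam := by
    intro c hc
    by_contra h
    exact absurd (csInf_le' (show c ∈ {c : Cardinal.{u} | lam < 2 ^ c} from not_le.1 h))
      (not_le.2 hc)
  have hκinf : ℵ₀ ≤ κ := by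
    by_contra h
    exact absurd (le_of_lt ((power_lt_aleph0 (nat_lt_aleph0 2) (not_le.1 h)).trans_le hlam))
      (not_le.2 hκ1)
  set β := κ.ord.ToType with hβdef
  have hβcard : #β = κ := mk_ord_toType κ
  haveI : Infinite β := by
    rw [infinite_iff, hβcard]; exact hκinf
  -- the tree of nodes
  let NodeI : Type u := {g : Lex (β → Fin 3) // ∃ i : β, ∀ j : β, i ≤ j → ofLex g j = 1}
  letI : LinearOrder NodeI := Subtype.instLinearOrder _
  let node : β → (β → Bool) → NodeI := fun i c =>
    ⟨toLex (fun j => if j < i then (if c j then 2 else 0) else 1),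
      ⟨i, fun j hj => if_neg (not_lt.2 hj)⟩⟩
  let J : Type u := WithBot NodeI
  let C : Type u := β → Bool
  let e : C → Lex (β → Fin 3) := fun c => toLex (fun j => if c j then 2 else 0)
  let S : C → Set J := fun c => insert ⊥ {x : J | ∃ g : NodeI, x = ↑g ∧ (g : Lex (β → Fin 3)) < e c}
  haveI hinfI : Infinite NodeI := by
    refine Infinite.of_injective (fun i : β => node i (fun _ => false)) ?_
    intro i i' h
    by_contra hne
    rcases lt_trichotomy i i' with hlt | heq | hlt
    · have hv : (if i < i then (if (false : Bool) then (2 : Fin 3) else 0) else 1) =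
          (if i < i' then (if (false : Bool) then (2 : Fin 3) else 0) else 1) :=
        congrFun (congrArg (fun g : NodeI => ofLex g.1) h) i
      rw [if_neg (lt_irrefl i), if_pos hlt] at hv
      exact absurd hv (by decide)
    · exact hne heq
    · have hv : (if i' < i then (if (false : Bool) then (2 : Fin 3) else 0) else 1) =
          (if i' < i' then (if (false : Bool) then (2 : Fin 3) else 0) else 1) :=
        congrFun (congrArg (fun g : NodeI => ofLex g.1) h) i'
      rw [if_pos hlt, if_neg (lt_irrefl i')] at hv
      exact absurd hv (by decide)
  have hcardI : #NodeI ≤ lam := by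
    have hinj : Function.Injective
        (fun g : NodeI => (⟨Classical.choose g.2, fun j => ofLex g.1 j.1⟩ :
          Σ i : β, (Set.Iio i → Fin 3))) := by
      intro g g' hgg
      have h1 : Classical.choose g.2 = Classical.choose g'.2 := congrArg Sigma.fst hgg
      refine Subtype.ext (funext fun j => ?_)
      show ofLex g.1 j = ofLex g'.1 j
      rcases lt_or_ge j (Classical.choose g.2) with hj | hj
      · have hval : (if h : j < Classical.choose g.2 then ofLex g.1 j else 1) =
            (if h : j < Classical.choose g'.2 then ofLex g'.1 j else 1) :=
          congrArg (fun p : (Σ i : β, (Set.Iio i → Fin 3)) =>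
            if h : j < p.1 then p.2 ⟨j, h⟩ else (1 : Fin 3)) hgg
        rwa [dif_pos hj, dif_pos (h1 ▸ hj)] at hval
      · rw [Classical.choose_spec g.2 j hj, Classical.choose_spec g'.2 j (h1 ▸ hj)]
    have hsig : #(Σ i : β, (Set.Iio i → Fin 3)) ≤ lam := by
      rw [mk_sigma]
      refine le_trans (sum_le_sum _ (fun _ => lam) ?_) ?_
      · intro i
        have hlt : #(Set.Iio i) < κ := mk_Iio_ord_toType i
        have harr : #(↥(Set.Iio i) → Fin 3) = (3 : Cardinal) ^ #(Set.Iio i) := by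
          simp [mk_arrow]
        rw [harr]
        rcases lt_or_ge (#(Set.Iio i)) ℵ₀ with hfin | hinf
        · exact le_trans (le_of_lt (power_lt_aleph0 (nat_lt_aleph0 3) hfin)) hlam
        · calc (3 : Cardinal) ^ #(Set.Iio i) ≤ #(Set.Iio i) ^ #(Set.Iio i) :=
                power_le_power_right (le_trans (le_of_lt (nat_lt_aleph0 3)) hinf)
            _ = 2 ^ #(Set.Iio i) := power_self_eq hinf
            _ ≤ lam := hκ2 _ hlt
      · rw [sum_const, lift_id, lift_id, hβcard]
        calc κ * lam ≤ lam * lam := mul_le_mul' hκlam le_rfl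
          _ = lam := mul_eq_self hlam
    exact le_trans (mk_le_of_injective hinj) hsig
  refine ⟨J, inferInstance, C, S, ?_, ?_, ?_, ?_, ?_, ?_⟩
  · -- #J ≤ lam
    have hJcard : #J = #NodeI + 1 := mk_option
    rw [hJcard]
    calc #NodeI + 1 ≤ lam + lam := add_le_add hcardI (le_trans (by norm_num) hlam)
      _ = lam := add_eq_self hlam
  · -- Infinite J
    exact Infinite.of_injective (fun g : NodeI => (↑g : J))
      (fun a b h => WithBot.coe_inj.1 h)
  · -- lam < #C
    have : #C = 2 ^ κ := by
      simp [C, mk_arrow, hβcard]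
    rw [this]; exact hκ1
  · -- nonempty cuts
    intro c; exact ⟨⊥, Set.mem_insert _ _⟩
  · -- downward closed
    intro c x hx y hy
    rcases hx with rfl | ⟨g, rfl, hg⟩
    · rw [le_bot_iff.1 hy]; exact Set.mem_insert _ _
    · induction y using WithBot.recBotCoe with
      | bot => exact Set.mem_insert _ _
      | coe g' =>
        refine Set.mem_insert_iff.2 (Or.inr ⟨g', rfl, lt_of_le_of_lt ?_ hg⟩)
        exact_mod_cast WithBot.coe_le_coe.1 hy
  · -- injectivity
    have key : ∀ c c' : C, ∀ i : β, (∀ j, j < i → c j = c' j) → c i = false → c' i = true →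
        S c ≠ S c' := by
      intro c c' i hagree hci hc'i hSS
      set σ : NodeI := node i c with hσdef
      have h1 : e c < (σ : Lex (β → Fin 3)) := by
        refine ⟨i, fun j hj => ?_, ?_⟩
        · show (if c j then (2 : Fin 3) else 0) = if j < i then (if c j then 2 else 0) else 1
          rw [if_pos hj]
        · show (if c i then (2 : Fin 3) else 0) < if i < i then (if c i then 2 else 0) else 1
          rw [hci, if_neg (lt_irrefl i)]
          decide
      have h2 : (σ : Lex (β → Fin 3)) < e c' := by
        refine ⟨i, fun j hj => ?_, ?_⟩
        · show (if j < i then (if c j then (2 : Fin 3) else 0) else 1) = if c' j then 2 else 0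
          rw [if_pos hj, hagree j hj]
        · show (if i < i then (if c i then (2 : Fin 3) else 0) else 1) < if c' i then 2 else 0
          rw [if_neg (lt_irrefl i), hc'i]
          decide
      have hmem : (↑σ : J) ∈ S c' := Set.mem_insert_iff.2 (Or.inr ⟨σ, rfl, h2⟩)
      rw [← hSS] at hmem
      rcases hmem with hbot | ⟨g, hgσ, hg⟩
      · exact WithBot.coe_ne_bot hbot
      · rw [show g = σ from WithBot.coe_inj.1 hgσ.symm] at hg
        exact lt_asymm h1 hg
    intro c c' hSS
    by_contra hne
    have hD : {j : β | c j ≠ c' j}.Nonempty := by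
      by_contra h
      rw [Set.not_nonempty_iff_eq_empty, Set.eq_empty_iff_forall_notMem] at h
      exact hne (funext fun j => not_not.1 (h j))
    obtain ⟨i, hiD, himin⟩ := (IsWellFounded.wf (r := ((· < ·) : β → β → Prop))).has_min _ hD
    have hagree : ∀ j, j < i → c j = c' j := by
      intro j hj
      by_contra h
      exact himin j h hj
    rcases Bool.eq_false_or_eq_true (c i) with hci | hci
    · refine key c' c i (fun j hj => (hagree j hj).symm) ?_ hci hSS.symm
      rcases Bool.eq_false_or_eq_true (c' i) with h | h
      · exact absurd (hci.trans h.symm) hiD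
      · exact h
    · refine key c c' i hagree hci ?_ hSS
      rcases Bool.eq_false_or_eq_true (c' i) with h | h
      · exact h
      · exact absurd (hci.trans h.symm) hiD
theorem exists_model_with_pattern {T : L.Theory} {n m : ℕ}
    (φ : L.Formula (Fin n ⊕ Fin m)) (M₀ : Theory.ModelType.{u, v, w} T)
    (a : ℕ → Fin n → M₀) (b : ℕ → Fin m → M₀)
    (hab : ∀ i j : ℕ, φ.Realize (Sum.elim (a i) (b j)) ↔ i < j)
    (J : Type x) [LinearOrder J] :
    ∃ (M : Theory.ModelType.{u, v, max u v x} T) (A : J → Fin n → M) (B : J → Fin m → M),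
      ∀ i j, φ.Realize (Sum.elim (A i) (B j)) ↔ i < j := by
  classical
  let α := (J × Fin n) ⊕ (J × Fin m)
  let Ψ : J × J → L.Formula α := fun p =>
    φ.relabel (Sum.map (fun k => (p.1, k)) (fun r => (p.2, r)))
  let f : J × J → L.Formula α := fun p => if p.1 < p.2 then Ψ p else (Ψ p).not
  have hfin : ∀ s : Finset (J × J), ∃ v : α → M₀, ∀ p ∈ s, (f p).Realize v := by
    intro s
    set t : Finset J := s.image Prod.fst ∪ s.image Prod.snd with ht
    let idx : ∀ x : J, x ∈ t → ℕ := fun x h => ((t.orderIsoOfFin rfl).symm ⟨x, h⟩ : Fin t.card)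
    have hidx : ∀ (x y : J) (hx : x ∈ t) (hy : y ∈ t), (idx x hx < idx y hy ↔ x < y) := by
      intro x y hx hy
      show ((t.orderIsoOfFin rfl).symm ⟨x, hx⟩ : Fin t.card).1 <
        ((t.orderIsoOfFin rfl).symm ⟨y, hy⟩ : Fin t.card).1 ↔ x < y
      rw [← Fin.lt_iff_val_lt_val, OrderIso.lt_iff_lt]
      exact Subtype.mk_lt_mk
    refine ⟨Sum.elim (fun p => if h : p.1 ∈ t then a (idx p.1 h) p.2 else a 0 p.2)
      (fun p => if h : p.1 ∈ t then b (idx p.1 h) p.2 else b 0 p.2), ?_⟩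
    rintro ⟨i, j⟩ hp
    have hi : i ∈ t := Finset.mem_union_left _ (Finset.mem_image.2 ⟨(i, j), hp, rfl⟩)
    have hj : j ∈ t := Finset.mem_union_right _ (Finset.mem_image.2 ⟨(i, j), hp, rfl⟩)
    have hΨ : (Ψ (i, j)).Realize (Sum.elim
        (fun p : J × Fin n => if h : p.1 ∈ t then a (idx p.1 h) p.2 else a 0 p.2)
        (fun p : J × Fin m => if h : p.1 ∈ t then b (idx p.1 h) p.2 else b 0 p.2)) ↔ i < j := by
      rw [show Ψ (i, j) = φ.relabel (Sum.map (fun k => (i, k)) (fun r => (j, r))) from rfl,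
        Formula.realize_relabel]
      have hcomp : (Sum.elim
          (fun p : J × Fin n => if h : p.1 ∈ t then a (idx p.1 h) p.2 else a 0 p.2)
          (fun p : J × Fin m => if h : p.1 ∈ t then b (idx p.1 h) p.2 else b 0 p.2)) ∘
          (Sum.map (fun k => (i, k)) (fun r => (j, r))) =
          Sum.elim (a (idx i hi)) (b (idx j hj)) := by
        funext x
        rcases x with k | r
        · simp only [Function.comp_apply, Sum.map_inl, Sum.elim_inl]
          rw [dif_pos hi]
        · simp only [Function.comp_apply, Sum.map_inr, Sum.elim_inr]
          rw [dif_pos hj]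
      rw [hcomp, hab, hidx]
    by_cases hij : i < j
    · rw [show f (i, j) = Ψ (i, j) from if_pos hij]
      exact hΨ.2 hij
    · rw [show f (i, j) = (Ψ (i, j)).not from if_neg hij, Formula.realize_not]
      exact fun hc => hij (hΨ.1 hc)
  obtain ⟨M, v, hv⟩ := exists_model_realize (T := T) f (M₀ : Type w) hfin
  refine ⟨M, fun i k => v (Sum.inl (i, k)), fun j r => v (Sum.inr (j, r)), fun i j => ?_⟩
  have hΨv : (Ψ (i, j)).Realize v ↔
      φ.Realize (Sum.elim (fun k => v (Sum.inl (i, k))) (fun r => v (Sum.inr (j, r)))) := by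
    rw [show Ψ (i, j) = φ.relabel (Sum.map (fun k => (i, k)) (fun r => (j, r))) from rfl,
      Formula.realize_relabel]
    apply Iff.of_eq
    congr 1
    funext x
    rcases x with k | r <;> rfl
  constructor
  · intro h
    by_contra hij
    have := hv (i, j)
    rw [show f (i, j) = (Ψ (i, j)).not from if_neg hij, Formula.realize_not] at this
    exact this (hΨv.2 h)
  · intro hij
    have := hv (i, j)
    rw [show f (i, j) = Ψ (i, j) from if_pos hij] at this
    exact hΨv.1 this


theorem model_elementaryDiagram_subtype {M : Type w} [L.Structure M]
    (NS : L.ElementarySubstructure M) :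
    letI : (constantsOn ↥NS).Structure M := constantsOn.structure Subtype.val
    M ⊨ L.elementaryDiagram ↥NS := by
  letI : (constantsOn ↥NS).Structure M := constantsOn.structure Subtype.val
  refine ⟨fun {σ} hσ => ?_⟩
  have hNS : (↥NS) ⊨ σ := mem_completeTheory.1 hσ
  have hNS' : (Formula.equivSentence.symm σ).Realize (fun a : ↥NS => (L.con a : ↥NS)) :=
    (Formula.realize_equivSentence_symm_con (↥NS) σ).2 hNS
  have h2 : (Formula.equivSentence.symm σ).Realize (fun a : ↥NS => ((L.con a) : M)) := by
    have h3 := NS.subtype.map_formula (Formula.equivSentence.symm σ) (fun a : ↥NS => (L.con a : ↥NS))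
    exact h3.2 hNS'
  exact (Formula.realize_equivSentence_symm_con M σ).1 h2

theorem exists_model_many_types {L : FirstOrder.Language.{u, u}} {T : L.Theory} {n m : ℕ}
    (φ : L.Formula (Fin n ⊕ Fin m)) (M₀ : Theory.ModelType.{u, u, u} T)
    (a : ℕ → Fin n → M₀) (b : ℕ → Fin m → M₀)
    (hab : ∀ i j : ℕ, φ.Realize (Sum.elim (a i) (b j)) ↔ i < j)
    (lam : Cardinal.{u}) (hlam : ℵ₀ ≤ lam) (hL : L.card ≤ lam) :
    ∃ N : Theory.ModelType.{u, u, u} T, #N = lam ∧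
      lam < #((L.elementaryDiagram N).CompleteType (Fin n)) := by
  classical
  obtain ⟨J, instJ, C, S, hJlam, hJinf, hClam, hSne, hSdc, hSinj⟩ := exists_bad_order lam hlam
  obtain ⟨Mstar, A, B, hAB⟩ := exists_model_with_pattern φ M₀ a b hab J
  -- `Mstar` is infinite
  haveI hMinf : Infinite (Mstar : Type u) := by
    have hinjA : Function.Injective A := by
      intro i i' hii
      by_contra hne
      rcases lt_or_gt_of_ne hne with hlt | hlt
      · have h1 := (hAB i i').2 hlt
        rw [hii] at h1
        exact absurd ((hAB i' i').1 h1) (lt_irrefl i')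
      · have h1 := (hAB i' i).2 hlt
        rw [← hii] at h1
        exact absurd ((hAB i i).1 h1) (lt_irrefl i)
    haveI := Infinite.of_injective A hinjA
    by_contra h
    rw [not_infinite_iff_finite] at h
    exact not_finite (Fin n → (Mstar : Type u))
  -- go up to a model of size `max lam #Mstar`
  obtain ⟨N₁b, ⟨emb⟩, hN₁card⟩ := exists_elementaryEmbedding_card_eq_of_ge L
    (Mstar : Type u) (max lam #(Mstar : Type u))
    (by simpa using hL.trans (le_max_left lam #(Mstar : Type u)))
    (by simpa using le_max_right lam #(Mstar : Type u))
  letI : L.Structure N₁b := N₁b.str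
  haveI : (N₁b : Type u) ⊨ T := (emb.theory_model_iff T).1 inferInstance
  haveI : Infinite (N₁b : Type u) := by
    rw [infinite_iff, hN₁card]; exact le_trans hlam (le_max_left _ _)
  -- come down to an elementary substructure of size `lam` containing the parameters
  have hscard : #(Set.range (fun p : J × Fin m => emb (B p.1 p.2))) ≤ lam := by
    refine le_trans mk_range_le ?_
    have h1 : #(J × Fin m) = #J * (m : Cardinal.{u}) := by
      simp [mk_prod]
    rw [h1]
    calc #J * (m : Cardinal.{u}) ≤ lam * lam :=
          mul_le_mul' hJlam (le_trans (le_of_lt (nat_lt_aleph0 m)) hlam)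
      _ = lam := mul_eq_self hlam
  obtain ⟨NS, hsub, hNScard0⟩ := exists_elementarySubstructure_card_eq L
    (Set.range (fun p : J × Fin m => emb (B p.1 p.2))) lam hlam
    (by simpa using hscard) (by simpa using hL)
    (by rw [lift_id, lift_id, hN₁card]; exact le_max_left _ _)
  have hNcard : #(↥NS) = lam := by simpa using hNScard0
  haveI : Nonempty (↥NS) := by
    rw [← mk_ne_zero_iff, hNcard]
    exact ne_of_gt (lt_of_lt_of_le aleph0_pos hlam)
  -- parameters and formulas
  let b' : J → Fin m → ↥NS := fun i r => ⟨emb (B i r), hsub ⟨(i, r), rfl⟩⟩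
  let ψ : J → L.Formula (↥NS ⊕ Fin n) := fun j =>
    φ.relabel (Sum.elim (fun k => Sum.inr k) (fun r => Sum.inl (b' j r)))
  letI : (constantsOn ↥NS).Structure N₁b := constantsOn.structure Subtype.val
  haveI hdiag : (N₁b : Type u) ⊨ L.elementaryDiagram ↥NS := model_elementaryDiagram_subtype NS
  have hψ : ∀ j k : J, (ψ j).Realize
      (Sum.elim (fun x : ↥NS => ((L.con x) : N₁b)) (fun q : Fin n => emb (A k q))) ↔ k < j := by
    intro j k
    rw [show ψ j = φ.relabel (Sum.elim (fun k => Sum.inr k) (fun r => Sum.inl (b' j r))) from rfl,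
      Formula.realize_relabel]
    have hcomp : (Sum.elim (fun x : ↥NS => ((L.con x) : N₁b)) (fun q : Fin n => emb (A k q))) ∘
        (Sum.elim (fun k => Sum.inr k) (fun r => Sum.inl (b' j r))) =
        ⇑emb ∘ Sum.elim (A k) (B j) := by
      funext y; rcases y with q | r <;> rfl
    rw [hcomp]
    exact (emb.map_formula φ (Sum.elim (A k) (B j))).trans (hAB k j)
  -- for every cut, a complete type
  have htype : ∀ c : C, ∃ p : (L.elementaryDiagram (↥NS)).CompleteType (Fin n),
      ∀ j : J, (enc (ψ j) ∈ p ↔ j ∉ S c) := by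
    intro c
    let F : J → (L[[↥NS]]).Formula (Fin n) := fun j =>
      if j ∈ S c then
        Formula.not (BoundedFormula.constantsVarsEquiv.symm (ψ j) : (L[[↥NS]]).Formula (Fin n))
      else (BoundedFormula.constantsVarsEquiv.symm (ψ j) : (L[[↥NS]]).Formula (Fin n))
    have hfin : ∀ t : Finset J, ∃ v : Fin n → N₁b, ∀ j ∈ t, (F j).Realize v := by
      intro t
      have hk : ∃ k : J, k ∈ S c ∧ ∀ j ∈ t.filter (fun j => j ∈ S c), j ≤ k := by
        by_cases hne : (t.filter (fun j => j ∈ S c)).Nonempty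
        · exact ⟨(t.filter (fun j => j ∈ S c)).max' hne,
            (Finset.mem_filter.1 ((t.filter (fun j => j ∈ S c)).max'_mem hne)).2,
            fun j hj => (t.filter (fun j => j ∈ S c)).le_max' j hj⟩
        · obtain ⟨k, hk⟩ := hSne c
          exact ⟨k, hk, fun j hj => (hne ⟨j, hj⟩).elim⟩
      obtain ⟨k, hkS, hkmax⟩ := hk
      refine ⟨fun q => emb (A k q), fun j hj => ?_⟩
      by_cases hjS : j ∈ S c
      · rw [show F j = _ from if_pos hjS, Formula.realize_not]
        intro hcon
        have h2 := (realize_cVE_symm (ψ j) (fun q => emb (A k q))).1 hcon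
        exact absurd ((hψ j k).1 h2)
          (not_lt.2 (hkmax j (Finset.mem_filter.2 ⟨hj, hjS⟩)))
      · rw [show F j = _ from if_neg hjS]
        refine (realize_cVE_symm (ψ j) (fun q => emb (A k q))).2 ((hψ j k).2 ?_)
        by_contra hkj
        exact hjS (hSdc c k hkS j (not_lt.1 hkj))
    obtain ⟨Mc, vc, hvc⟩ := exists_model_realize (T := L.elementaryDiagram ↥NS) F
      (N₁b : Type u) hfin
    letI : L.Structure Mc := (L.lhomWithConstants ↥NS).reduct Mc
    haveI : (L.lhomWithConstants ↥NS).IsExpansionOn Mc := LHom.isExpansionOn_reduct _ _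
    refine ⟨(L.elementaryDiagram ↥NS).typeOf vc, fun j => ?_⟩
    rw [enc_mem_typeOf]
    by_cases hjS : j ∈ S c
    · refine iff_of_false ?_ (by simp [hjS])
      intro hcon
      have h2 := hvc j
      rw [show F j = _ from if_pos hjS, Formula.realize_not] at h2
      exact h2 ((realize_cVE_symm (ψ j) vc).2 hcon)
    · refine iff_of_true ?_ hjS
      have h2 := hvc j
      rw [show F j = _ from if_neg hjS] at h2
      exact (realize_cVE_symm (ψ j) vc).1 h2
  choose pc hpc using htype
  have hpcinj : Function.Injective pc := by
    intro c c' hcc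
    apply hSinj
    ext j
    have h1 := hpc c j
    rw [hcc] at h1
    exact not_iff_not.1 (h1.symm.trans (hpc c' j))
  exact ⟨Theory.ModelType.of T ↥NS, hNcard,
    lt_of_lt_of_le hClam (Cardinal.mk_le_of_injective hpcinj)⟩

theorem count_types {L : FirstOrder.Language.{u, u}} {T : L.Theory}
    (lam : Cardinal.{u}) (hlam : ℵ₀ ≤ lam) (hL : L.card ≤ lam)
    (H : ∀ M : Theory.ModelType.{u, u, u} T, #M = lam →
      #((L.elementaryDiagram M).CompleteType (Fin 1)) ≤ lam) :
    ∀ k, ∀ M : Theory.ModelType.{u, u, u} T, #M = lam →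
      #((L.elementaryDiagram M).CompleteType (Fin (k + 1))) ≤ lam := by
  classical
  intro k
  induction k with
  | zero => exact H
  | succ k IH =>
    intro N hN
    set T' := L.elementaryDiagram (N : Type u) with hT'
    -- realize each 1-type
    have hrealize1 : ∀ q : T'.CompleteType (Fin 1),
        ∃ (MM : Theory.ModelType.{u, u, u} T') (ww : Fin 1 → MM), T'.typeOf ww = q := by
      intro q
      obtain ⟨MM, ww, hww⟩ := Theory.exists_modelType_is_realized_in T' q
      exact ⟨MM, ww, hww⟩
    choose Mq wq hwq using hrealize1
    -- models of T' are large
    have hcon_inj : ∀ (MM : Theory.ModelType.{u, u, u} T'),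
        Function.Injective (fun x : (N : Type u) => ((L.con x) : MM)) := by
      intro MM x y hxy
      by_contra hne
      have hsent : (Formula.not (Term.equal (Constants.term (L.con x))
          (Constants.term (L.con y))) : L[[(N : Type u)]].Sentence) ∈ T' := by
        rw [hT', mem_completeTheory]
        simp only [Sentence.Realize, Formula.realize_not, Formula.realize_equal,
          Term.realize_constants]
        intro h
        exact hne (by exact_mod_cast h)
      have hval := T'.realize_sentence_of_mem (M := (MM : Type u)) hsent
      simp only [Sentence.Realize, Formula.realize_not, Formula.realize_equal,
        Term.realize_constants] at hval
      exact hval hxy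
    have hLNcard : (L[[(N : Type u)]]).card ≤ lam := by
      rw [card_withConstants, lift_id, lift_id, hN]
      calc L.card + lam ≤ lam + lam := add_le_add hL le_rfl
        _ = lam := add_eq_self hlam
    -- elementary substructures of size lam containing the realizing point
    have hsubq : ∀ q : T'.CompleteType (Fin 1),
        ∃ SS : (L[[(N : Type u)]]).ElementarySubstructure (Mq q),
          wq q 0 ∈ SS ∧ #(↥SS) = lam := by
      intro q
      obtain ⟨SS, hss, hcard⟩ := exists_elementarySubstructure_card_eq
        (L := L[[(N : Type u)]]) (M := (Mq q : Type u)) {wq q 0} lam hlam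
        (by
          rw [lift_id, lift_id, mk_singleton]
          exact le_trans (le_of_lt one_lt_aleph0) hlam)
        (by rw [lift_id, lift_id]; exact hLNcard)
        (by
          rw [lift_id, lift_id, ← hN]
          exact mk_le_of_injective (hcon_inj (Mq q)))
      exact ⟨SS, hss (Set.mem_singleton _), by simpa using hcard⟩
    choose NSq hNSmem hNScard using hsubq
    let Nq : T'.CompleteType (Fin 1) → Type u := fun q => ↥(NSq q)
    letI instNqL : ∀ q, L.Structure (Nq q) :=
      fun q => (L.lhomWithConstants (N : Type u)).reduct (Nq q)
    haveI instNqExp : ∀ q, (L.lhomWithConstants (N : Type u)).IsExpansionOn (Nq q) :=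
      fun q => LHom.isExpansionOn_reduct _ _
    have honT : (L.lhomWithConstants (N : Type u)).onTheory T ⊆ T' := by
      rintro σ' ⟨σ, hσ, rfl⟩
      rw [hT', mem_completeTheory, LHom.realize_onSentence]
      exact T.realize_sentence_of_mem hσ
    haveI instNqT' : ∀ q, (Nq q) ⊨ T' := fun q => inferInstance
    haveI instNqT : ∀ q, (Nq q) ⊨ T :=
      fun q => (LHom.onTheory_model (L.lhomWithConstants (N : Type u)) T).1
        (Theory.Model.mono (instNqT' q) honT)
    haveI instNqNe : ∀ q, Nonempty (Nq q) := fun q => ⟨⟨wq q 0, hNSmem q⟩⟩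
    haveI instNqDiag : ∀ q, (Nq q) ⊨ L.elementaryDiagram (Nq q) :=
      fun q => ⟨fun _ hσ => mem_completeTheory.1 hσ⟩
    let NqM : T'.CompleteType (Fin 1) → Theory.ModelType.{u, u, u} T :=
      fun q => Theory.ModelType.of T (Nq q)
    have hIH : ∀ q, #((L.elementaryDiagram (Nq q)).CompleteType (Fin (k + 1))) ≤ lam :=
      fun q => IH (NqM q) (hNScard q)
    let aq : ∀ q, Nq q := fun q => ⟨wq q 0, hNSmem q⟩
    let cq : ∀ q, ((N : Type u)) → Nq q := fun q x => ((L.con x) : Nq q)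
    let ρ : ∀ q, ((N : Type u) ⊕ Fin (k + 2)) → (Nq q ⊕ Fin (k + 1)) := fun q =>
      Sum.elim (fun x => Sum.inl (cq q x)) (Fin.cases (Sum.inl (aq q)) (fun i => Sum.inr i))
    -- realize each (k+2)-type
    have hrealize2 : ∀ p : T'.CompleteType (Fin (k + 2)),
        ∃ (MM : Theory.ModelType.{u, u, u} T') (vv : Fin (k + 2) → MM), T'.typeOf vv = p := by
      intro p
      obtain ⟨MM, vv, hvv⟩ := Theory.exists_modelType_is_realized_in T' p
      exact ⟨MM, vv, hvv⟩
    choose Mp vp hvp using hrealize2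
    let qof : T'.CompleteType (Fin (k + 2)) → T'.CompleteType (Fin 1) := fun p =>
      T'.typeOf (fun _ : Fin 1 => vp p 0)
    -- the key construction
    have hkey : ∀ p : T'.CompleteType (Fin (k + 2)),
        ∃ r : (L.elementaryDiagram (Nq (qof p))).CompleteType (Fin (k + 1)),
          ∀ χ : L.Formula ((N : Type u) ⊕ Fin (k + 2)),
            (enc χ ∈ p ↔ enc (χ.relabel (ρ (qof p))) ∈ r) := by
      intro p
      set q := qof p with hq
      letI : L.Structure (Mp p : Type u) := (L.lhomWithConstants (N : Type u)).reduct _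
      haveI : (L.lhomWithConstants (N : Type u)).IsExpansionOn (Mp p : Type u) :=
        LHom.isExpansionOn_reduct _ _
      letI : L.Structure (Mq q : Type u) := (L.lhomWithConstants (N : Type u)).reduct _
      haveI : (L.lhomWithConstants (N : Type u)).IsExpansionOn (Mq q : Type u) :=
        LHom.isExpansionOn_reduct _ _
      set conMp : ((N : Type u)) → (Mp p : Type u) := (fun x => ((L.con x) : Mp p)) with hconMp
      -- the family of formulas over `Nq q` approximating the type `p`
      let F : L.Formula ((N : Type u) ⊕ Fin (k + 2)) → (L[[Nq q]]).Formula (Fin (k + 1)) :=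
        fun χ => BoundedFormula.constantsVarsEquiv.symm
          ((if χ.Realize (Sum.elim conMp (vp p)) then χ else χ.not).relabel (ρ q))
      have hfin : ∀ s : Finset (L.Formula ((N : Type u) ⊕ Fin (k + 2))),
          ∃ u : Fin (k + 1) → Nq q, ∀ χ ∈ s, (F χ).Realize u := by
        intro s
        set ξ : L.Formula ((N : Type u) ⊕ Fin (k + 2)) :=
          ((s.image (fun χ => if χ.Realize (Sum.elim conMp (vp p)) then χ else χ.not)).toList.foldr
            (· ⊓ ·) ⊤) with hξdef
        have hξmem : ∀ χ' ∈ (s.image (fun χ =>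
            if χ.Realize (Sum.elim conMp (vp p)) then χ else χ.not)).toList,
            χ'.Realize (Sum.elim conMp (vp p)) := by
          intro χ' hχ'
          rw [Finset.mem_toList, Finset.mem_image] at hχ'
          obtain ⟨χ, hχs, rfl⟩ := hχ'
          by_cases h : χ.Realize (Sum.elim conMp (vp p))
          · rwa [if_pos h]
          · rw [if_neg h, Formula.realize_not]; exact h
        have hξ : ξ.Realize (Sum.elim conMp (vp p)) :=
          (BoundedFormula.realize_foldr_inf _ _ _).2 hξmem
        -- existentially quantify all variables except the first
        let g : ((N : Type u) ⊕ Fin (k + 2)) → (((N : Type u) ⊕ Fin 1) ⊕ Fin (k + 1)) :=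
          Sum.elim (fun x => Sum.inl (Sum.inl x))
            (Fin.cases (Sum.inl (Sum.inr 0)) (fun i => Sum.inr i))
        have hθMp : ((ξ.relabel g).iExs (Fin (k + 1))).Realize (Sum.elim conMp (fun _ : Fin 1 => vp p 0)) := by
          rw [Formula.realize_iExs]
          refine ⟨fun i => vp p i.succ, ?_⟩
          have hvass : (fun y => Sum.elim (Sum.elim conMp (fun _ : Fin 1 => vp p 0))
              (fun i => vp p i.succ) (g y)) = Sum.elim conMp (vp p) := by
            funext y
            rcases y with x | j
            · rfl
            · refine Fin.cases ?_ (fun i => ?_) j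
              · simp [g]
              · simp [g]
          rw [Formula.realize_relabel, Function.comp_def, hvass]
          exact hξ
        have hencθ : enc ((ξ.relabel g).iExs (Fin (k + 1))) ∈ q := by
          rw [hq]
          exact enc_mem_typeOf.2 hθMp
        rw [← hwq q] at hencθ
        have hθMq : ((ξ.relabel g).iExs (Fin (k + 1))).Realize
            (Sum.elim (fun x : (N : Type u) => ((L.con x) : Mq q)) (wq q)) :=
          enc_mem_typeOf.1 hencθ
        -- transfer down to the small elementary substructure
        have hstep1 : Formula.Realize
            (BoundedFormula.constantsVarsEquiv.symm ((ξ.relabel g).iExs (Fin (k + 1))) : L[[(N : Type u)]].Formula (Fin 1))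
            (wq q) := by
          rw [realize_cVE_symm]
          exact hθMq
        have hfuneq : ⇑(NSq q).subtype ∘ (fun _ : Fin 1 => aq q) = wq q := by
          funext i
          rw [Subsingleton.elim i 0]
          rfl
        have hstep2 : Formula.Realize
            (BoundedFormula.constantsVarsEquiv.symm ((ξ.relabel g).iExs (Fin (k + 1))) : L[[(N : Type u)]].Formula (Fin 1))
            (fun _ : Fin 1 => aq q) := by
          have h3 := (NSq q).subtype.map_formula
            (BoundedFormula.constantsVarsEquiv.symm ((ξ.relabel g).iExs (Fin (k + 1))) : L[[(N : Type u)]].Formula (Fin 1))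
            (fun _ : Fin 1 => aq q)
          rw [hfuneq] at h3
          exact h3.1 hstep1
        have hθNq : ((ξ.relabel g).iExs (Fin (k + 1))).Realize (Sum.elim (cq q) (fun _ : Fin 1 => aq q)) := by
          rw [← realize_cVE_symm (M := Nq q)]
          exact hstep2
        rw [Formula.realize_iExs] at hθNq
        obtain ⟨u, hu⟩ := hθNq
        have hvass2 : (fun y => Sum.elim (Sum.elim (cq q) (fun _ : Fin 1 => aq q)) u (g y)) =
            Sum.elim (cq q) (Fin.cases (aq q) u) := by
          funext y
          rcases y with x | j
          · rfl
          · refine Fin.cases ?_ (fun i => ?_) j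
            · simp [g]
            · simp [g]
        rw [Formula.realize_relabel, Function.comp_def, hvass2] at hu
        refine ⟨u, fun χ hχs => ?_⟩
        have hFχ : F χ = BoundedFormula.constantsVarsEquiv.symm
            ((if χ.Realize (Sum.elim conMp (vp p)) then χ else χ.not).relabel (ρ q)) := rfl
        rw [hFχ, realize_cVE_symm, Formula.realize_relabel]
        have hvass3 : (Sum.elim (fun x : Nq q => ((L.con x) : Nq q)) u) ∘ (ρ q) =
            Sum.elim (cq q) (Fin.cases (aq q) u) := by
          funext y
          rcases y with x | j
          · rfl
          · refine Fin.cases ?_ (fun i => ?_) j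
            · simp only [ρ, Function.comp_apply, Sum.elim_inr, Fin.cases_zero, Sum.elim_inl]
              rfl
            · simp [ρ]
        rw [hvass3]
        exact (BoundedFormula.realize_foldr_inf _ _ _).1 hu _
          (Finset.mem_toList.2 (Finset.mem_image_of_mem _ hχs))
      obtain ⟨Mr, ur, hur⟩ := exists_model_realize (T := L.elementaryDiagram (Nq q)) F
        (Nq q) hfin
      letI : L.Structure (Mr : Type u) := (L.lhomWithConstants (Nq q)).reduct _
      haveI : (L.lhomWithConstants (Nq q)).IsExpansionOn (Mr : Type u) :=
        LHom.isExpansionOn_reduct _ _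
      refine ⟨(L.elementaryDiagram (Nq q)).typeOf ur, fun χ => ?_⟩
      rw [← hvp p, enc_mem_typeOf, enc_mem_typeOf, Formula.realize_relabel]
      have hurχ : ∀ χ' : L.Formula ((N : Type u) ⊕ Fin (k + 2)),
          ((if χ'.Realize (Sum.elim conMp (vp p)) then χ' else χ'.not).Realize
            ((Sum.elim (fun x : Nq q => ((L.con x) : Mr)) ur) ∘ (ρ q))) := by
        intro χ'
        have h5 := hur χ'
        rw [show F χ' = BoundedFormula.constantsVarsEquiv.symm
            ((if χ'.Realize (Sum.elim conMp (vp p)) then χ' else χ'.not).relabel (ρ q)) from rfl,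
          realize_cVE_symm, Formula.realize_relabel] at h5
        exact h5
      constructor
      · intro h
        have h6 := hurχ χ
        rwa [if_pos h] at h6
      · intro h
        by_contra hne
        have h6 := hurχ χ
        rw [if_neg hne, Formula.realize_not] at h6
        exact h6 h
    choose rp hrp using hkey
    -- the resulting injection into a sigma type
    have hΦinj : Function.Injective (fun p : T'.CompleteType (Fin (k + 2)) =>
        (⟨qof p, rp p⟩ : Σ q : T'.CompleteType (Fin 1),
          (L.elementaryDiagram (Nq q)).CompleteType (Fin (k + 1)))) := by
      intro p p' hpp
      simp only [Sigma.mk.inj_iff] at hpp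
      obtain ⟨h1, h2⟩ := hpp
      have key2 : ∀ (q1 q2 : T'.CompleteType (Fin 1)) (_ : q1 = q2)
          (r1 : (L.elementaryDiagram (Nq q1)).CompleteType (Fin (k + 1)))
          (r2 : (L.elementaryDiagram (Nq q2)).CompleteType (Fin (k + 1))), HEq r1 r2 →
          ∀ χ : L.Formula ((N : Type u) ⊕ Fin (k + 2)),
            (enc (χ.relabel (ρ q1)) ∈ r1 ↔ enc (χ.relabel (ρ q2)) ∈ r2) := by
        rintro q1 q2 rfl r1 r2 hr χ
        rw [eq_of_heq hr]
      refine SetLike.ext fun σ => ?_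
      obtain ⟨χ, rfl⟩ := enc_surjective σ
      rw [hrp p χ, hrp p' χ]
      exact key2 _ _ h1 _ _ h2 χ
    calc #(T'.CompleteType (Fin (k + 1 + 1)))
        ≤ #(Σ q : T'.CompleteType (Fin 1),
            (L.elementaryDiagram (Nq q)).CompleteType (Fin (k + 1))) :=
          mk_le_of_injective hΦinj
      _ = sum (fun q : T'.CompleteType (Fin 1) =>
            #((L.elementaryDiagram (Nq q)).CompleteType (Fin (k + 1)))) := mk_sigma _
      _ ≤ sum (fun _ : T'.CompleteType (Fin 1) => lam) := sum_le_sum _ _ hIH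
      _ = #(T'.CompleteType (Fin 1)) * lam := sum_const' _ _
      _ ≤ lam * lam := mul_le_mul' (H N hN) le_rfl
      _ = lam := mul_eq_self hlam

end OPWork

open FirstOrder Cardinal

/-- A complete theory `T` has the order property if some formula `φ(x̄, ȳ)` linearly orders
an infinite set of tuples in some model of `T`: there are tuples `āᵢ`, `b̄ⱼ` (`i, j < ω`)
with `M ⊨ φ(āᵢ, b̄ⱼ)` iff `i < j`. -/
def FirstOrder.Language.Theory.HasOrderProperty {L : FirstOrder.Language.{u, u}}
    (T : L.Theory) : Prop :=
  ∃ (n m : ℕ) (φ : L.Formula (Fin n ⊕ Fin m))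
    (M : FirstOrder.Language.Theory.ModelType.{u, u, u} T)
    (a : ℕ → Fin n → M) (b : ℕ → Fin m → M),
    ∀ i j : ℕ, φ.Realize (Sum.elim (a i) (b j)) ↔ i < j

/-- If some formula has the order property, then for every infinite cardinal `λ ≥ |L|`
there is a model `M` of `T` of cardinality `λ` over which there are more than `λ`
complete 1-types; i.e. `T` is unstable in every such cardinal. -/
theorem unstable_in_every_cardinal_of_orderProperty {L : FirstOrder.Language.{u, u}}
    (T : L.Theory) (hT : T.IsComplete) (hop : T.HasOrderProperty) :
    ∀ lam : Cardinal.{u}, ℵ₀ ≤ lam → L.card ≤ lam →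
      ∃ M : FirstOrder.Language.Theory.ModelType.{u, u, u} T, #M = lam ∧
        lam < #((L.elementaryDiagram M).CompleteType (Fin 1)) := by
  intro lam hlam hL
  by_contra hcon
  push_neg at hcon
  obtain ⟨n, m, φ, M₀, a, b, hab⟩ := hop
  obtain ⟨N, hNcard, hNtypes⟩ := OPWork.exists_model_many_types φ M₀ a b hab lam hlam hL
  rcases n with - | k
  · -- `n = 0` is impossible
    have ha01 : a 0 = a 1 := funext fun k => k.elim0
    have h1 := (hab 0 1).2 (by norm_num)
    rw [ha01] at h1
    exact absurd ((hab 1 1).1 h1) (lt_irrefl 1)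
  · have hcount := OPWork.count_types lam hlam hL hcon k N hNcard
    exact absurd hNtypes (not_lt.2 hcount)
end

section
/- Let T be a complete first-order theory in a language L such that no formula φ(x̄,ȳ) has the order property (T is stable). Then for every infinite cardinal λ satisfying λ = λ^{max(|L|,ℵ₀)} and every model M of T of cardinality at most λ, the number of complete 1-types over M is at most λ. -/
open FirstOrder Cardinal

universe u



open Set

namespace StabilityAux

/-- Infinite Ramsey theorem for pairs, two colors. -/
theorem ramsey_pairs (r : ℕ → ℕ → Prop) :
    ∃ g : ℕ → ℕ, StrictMono g ∧
      ((∀ i j, i < j → r (g i) (g j)) ∨ (∀ i j, i < j → ¬ r (g i) (g j))) := by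
  classical
  have step : ∀ (A : Set ℕ), A.Infinite → ∃ (x : ℕ) (A' : Set ℕ), A'.Infinite ∧
      x ∈ A ∧ A' ⊆ A ∧ (∀ y ∈ A', x < y) ∧
      ((∀ y ∈ A', r x y) ∨ (∀ y ∈ A', ¬ r x y)) := by
    intro A hA
    obtain ⟨x, hx⟩ := hA.nonempty
    have hBig : (A ∩ Ioi x).Infinite := by
      have : A ∩ Ioi x = A \ (Iic x) := by
        ext y; simp [mem_Ioi, mem_Iic, not_le, and_comm]
      rw [this]
      exact hA.diff (finite_Iic x)
    have hsplit : (A ∩ Ioi x) = {y ∈ A ∩ Ioi x | r x y} ∪ {y ∈ A ∩ Ioi x | ¬ r x y} := by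
      ext y; by_cases h : r x y <;> simp [h]
    by_cases h1 : {y ∈ A ∩ Ioi x | r x y}.Infinite
    · exact ⟨x, _, h1, hx, fun y hy => hy.1.1, fun y hy => hy.1.2, Or.inl fun y hy => hy.2⟩
    · have h2 : {y ∈ A ∩ Ioi x | ¬ r x y}.Infinite := by
        by_contra h2
        rw [Set.not_infinite] at h1 h2
        exact hBig (by rw [hsplit]; exact h1.union h2)
      exact ⟨x, _, h2, hx, fun y hy => hy.1.1, fun y hy => hy.1.2, Or.inr fun y hy => hy.2⟩
  choose pick nextA hInf hmem hsub hlt hcol using step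
  -- iterate
  let seq : ℕ → {A : Set ℕ // A.Infinite} :=
    fun n => Nat.rec ⟨Set.univ, Set.infinite_univ⟩
      (fun _ s => ⟨nextA s.1 s.2, hInf s.1 s.2⟩) n
  have seq_succ : ∀ n, (seq (n+1)).1 = nextA (seq n).1 (seq n).2 := fun n => rfl
  set piv : ℕ → ℕ := fun n => pick (seq n).1 (seq n).2 with hpiv
  -- chain facts
  have hchain : ∀ n m, n ≤ m → (seq m).1 ⊆ (seq n).1 := by
    intro n m hnm
    induction m with
    | zero => cases Nat.le_zero.1 hnm; exact subset_rfl
    | succ m ih =>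
      rcases Nat.lt_or_ge n (m+1) with h | h
      · exact (by rw [seq_succ]; exact hsub (seq m).1 (seq m).2 : (seq (m+1)).1 ⊆ (seq m).1).trans
          (ih (Nat.lt_succ_iff.1 h))
      · cases le_antisymm hnm h; exact subset_rfl
  have hpiv_mem : ∀ n, piv n ∈ (seq n).1 := fun n => hmem _ _
  have hpiv_next : ∀ n, ∀ y ∈ (seq (n+1)).1, piv n < y := by
    intro n y hy; rw [seq_succ] at hy; exact hlt _ _ y hy
  have hpiv_mem' : ∀ i j, i < j → piv j ∈ (seq (i+1)).1 := by
    intro i j hij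
    exact hchain (i+1) j hij (hpiv_mem j)
  have hpiv_mono : StrictMono piv := by
    have h : ∀ i j, i < j → piv i < piv j := fun i j hij =>
      hpiv_next i (piv j) (hpiv_mem' i j hij)
    exact fun i j hij => h i j hij
  -- colors
  set c : ℕ → Prop := fun n => ∀ y ∈ (seq (n+1)).1, r (piv n) y with hc
  have hcol' : ∀ n, c n ∨ (∀ y ∈ (seq (n+1)).1, ¬ r (piv n) y) := by
    intro n
    have := hcol (seq n).1 (seq n).2
    rw [← seq_succ] at this
    exact this
  by_cases hK : {n | c n}.Infinite
  · haveI := hK.to_subtype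
    let e : ℕ → {n | c n} := fun k => Nat.Subtype.orderIsoOfNat {n | c n} k
    have he : StrictMono fun k => (e k : ℕ) := fun a b h => by
      exact (Nat.Subtype.orderIsoOfNat {n | c n}).strictMono h
    refine ⟨fun k => piv (e k), hpiv_mono.comp he, Or.inl ?_⟩
    intro i j hij
    have hcei : c (e i) := (e i).2
    exact hcei (piv (e j)) (hpiv_mem' (e i) (e j) (he hij))
  · have hK' : {n | ¬ c n}.Infinite := by
      by_contra h
      rw [Set.not_infinite] at hK h
      exact Set.infinite_univ (α := ℕ) (by
        have : (Set.univ : Set ℕ) = {n | c n} ∪ {n | ¬ c n} := by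
          ext n
          simp only [mem_univ, mem_union, mem_setOf_eq, true_iff]
          exact em (c n)
        rw [this]; exact hK.union h)
    haveI := hK'.to_subtype
    let e : ℕ → {n | ¬ c n} := fun k => Nat.Subtype.orderIsoOfNat {n | ¬ c n} k
    have he : StrictMono fun k => (e k : ℕ) := fun a b h => by
      exact (Nat.Subtype.orderIsoOfNat {n | ¬ c n}).strictMono h
    refine ⟨fun k => piv (e k), hpiv_mono.comp he, Or.inr ?_⟩
    intro i j hij
    have hne : ¬ c (e i) := (e i).2
    have := (hcol' (e i)).resolve_left hne
    exact this (piv (e j)) (hpiv_mem' (e i) (e j) (he hij))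

end StabilityAux

namespace StabilityAux

/-- The key "process" lemma: if `D`-membership patterns of `S` are finitely realizable by
elements of `A`, and there is no infinite `D`-ladder nor `¬D`-ladder, then `S` is determined
by the `D`-profile on some finite list from `A`. -/
theorem exists_det {A : Type*} {β : Type*} (D : A → β → Prop) (S : Set β)
    (finsat : ∀ C : Finset β, ∃ a : A, ∀ b ∈ C, (D a b ↔ b ∈ S))
    (nolad : ¬ ∃ (a : ℕ → A) (b : ℕ → β), ∀ i j, D (a i) (b j) ↔ i < j)
    (nolad' : ¬ ∃ (a : ℕ → A) (b : ℕ → β), ∀ i j, ¬ D (a i) (b j) ↔ i < j) :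
    ∃ l : List A, ∀ b b' : β, (∀ a ∈ l, (D a b ↔ D a b')) → (b ∈ S ↔ b' ∈ S) := by
  classical
  by_contra hdet
  push_neg at hdet
  -- from failure of determination, get an oriented bad pair for each list
  have hpair : ∀ l : List A, ∃ p : β × β,
      (∀ a ∈ l, (D a p.1 ↔ D a p.2)) ∧ p.1 ∈ S ∧ p.2 ∉ S := by
    intro l
    obtain ⟨b, b', hprof, hne⟩ := hdet l
    rcases hne with ⟨hb, hb'⟩ | ⟨hb, hb'⟩
    · exact ⟨(b, b'), hprof, hb, hb'⟩
    · exact ⟨(b', b), fun a ha => (hprof a ha).symm, hb', hb⟩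
  choose pair hpairprof hpairS hpairS' using hpair
  -- one step of the construction
  have step : ∀ h : List (A × β × β), ∃ t : A × β × β,
      (∀ a ∈ h.map (fun u => u.1), (D a t.2.1 ↔ D a t.2.2)) ∧
      t.2.1 ∈ S ∧ t.2.2 ∉ S ∧
      (∀ u ∈ h, (D t.1 u.2.1 ↔ u.2.1 ∈ S) ∧ (D t.1 u.2.2 ↔ u.2.2 ∈ S)) ∧
      (D t.1 t.2.1 ↔ t.2.1 ∈ S) ∧ (D t.1 t.2.2 ↔ t.2.2 ∈ S) := by
    intro h
    set l := h.map (fun u => u.1)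
    set bp := pair l
    have hC := finsat ((h.map (fun u => u.2.1)).toFinset ∪ (h.map (fun u => u.2.2)).toFinset
      ∪ {bp.1, bp.2})
    obtain ⟨a, ha⟩ := hC
    refine ⟨(a, bp), hpairprof l, hpairS l, hpairS' l, ?_, ?_, ?_⟩
    · intro u hu
      constructor
      · exact ha u.2.1 (by
          simp only [Finset.mem_union, List.mem_toFinset, List.mem_map]
          exact Or.inl (Or.inl ⟨u, hu, rfl⟩))
      · exact ha u.2.2 (by
          simp only [Finset.mem_union, List.mem_toFinset, List.mem_map]
          exact Or.inl (Or.inr ⟨u, hu, rfl⟩))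
    · exact ha bp.1 (by simp)
    · exact ha bp.2 (by simp)
  choose stp hstp1 hstp2 hstp3 hstp4 hstp5 hstp6 using step
  -- iterate
  let hist : ℕ → List (A × β × β) := fun n =>
    Nat.rec [] (fun _ h => h ++ [stp h]) n
  have hist_succ : ∀ n, hist (n+1) = hist n ++ [stp (hist n)] := fun n => rfl
  set f : ℕ → A × β × β := fun n => stp (hist n) with hf
  have hist_eq : ∀ n, hist n = (List.range n).map f := by
    intro n
    induction n with
    | zero => rfl
    | succ n ih =>
      rw [hist_succ, List.range_succ, List.map_append, ih]
      simp [hf, ← ih]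
      rw [hf] at ih; rw [← ih]
  set a : ℕ → A := fun n => (f n).1 with hadef
  set b : ℕ → β := fun n => (f n).2.1 with hbdef
  set b' : ℕ → β := fun n => (f n).2.2 with hb'def
  have hmemf : ∀ i n, i < n → f i ∈ hist n := by
    intro i n hin
    rw [hist_eq]
    exact List.mem_map_of_mem (f := f) (List.mem_range.2 hin)
  -- properties
  have hbS : ∀ n, b n ∈ S := fun n => hstp2 (hist n)
  have hb'S : ∀ n, b' n ∉ S := fun n => hstp3 (hist n)
  have hprof : ∀ i n, i < n → (D (a i) (b n) ↔ D (a i) (b' n)) := by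
    intro i n hin
    refine hstp1 (hist n) (a i) ?_
    exact List.mem_map_of_mem (hmemf i n hin)
  have hreal : ∀ t n, t ≤ n → D (a n) (b t) ∧ ¬ D (a n) (b' t) := by
    intro t n htn
    rcases eq_or_lt_of_le htn with rfl | hlt
    · exact ⟨(hstp5 (hist t)).2 (hbS t), fun h => (hb'S t) ((hstp6 (hist t)).1 h)⟩
    · have := hstp4 (hist n) (f t) (hmemf t n hlt)
      exact ⟨this.1.2 (hbS t), fun h => (hb'S t) (this.2.1 h)⟩
  -- Ramsey on the upper triangle
  obtain ⟨g, hg, hcase⟩ := ramsey_pairs (fun i j => D (a i) (b j))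
  rcases hcase with hpos | hneg
  · -- ladder for D with b'
    refine nolad ⟨a ∘ g, b' ∘ g, ?_⟩
    intro i j
    constructor
    · intro hD
      by_contra hij
      push_neg at hij
      exact (hreal (g j) (g i) (hg.le_iff_le.2 hij)).2 hD
    · intro hij
      have h1 : D (a (g i)) (b (g j)) := hpos i j hij
      exact (hprof (g i) (g j) (hg hij)).1 h1
  · -- ladder for ¬D with b
    refine nolad' ⟨a ∘ g, b ∘ g, ?_⟩
    intro i j
    constructor
    · intro hD
      by_contra hij
      push_neg at hij
      exact hD (hreal (g j) (g i) (hg.le_iff_le.2 hij)).1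
    · intro hij
      exact hneg i j hij

end StabilityAux


open FirstOrder Cardinal FirstOrder.Language



namespace StabilityAux

open FirstOrder.Language FirstOrder.Language.Theory

variable {L : FirstOrder.Language.{u, u}} {T : L.Theory} {M : T.ModelType}

/-- relabeling map sending the `x`-variable into the variable slot and parameters to constants -/
def gmap (m : ℕ) (b : Fin m → M) : (Fin 1 ⊕ Fin m) → ((M : Type u) ⊕ Fin 1) :=
  Sum.elim Sum.inr (fun j => Sum.inl (b j))

/-- The sentence `φ(x, b)` with `x` the type variable and `b` parameters from `M`. -/
noncomputable def instSent (m : ℕ) (φ : L.Formula (Fin 1 ⊕ Fin m)) (b : Fin m → M) :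
    (L[[(M : Type u)]][[Fin 1]]).Sentence :=
  Formula.equivSentence (BoundedFormula.constantsVarsEquiv.symm (φ.relabel (gmap m b)))

/-- The `φ`-part of a complete type. -/
noncomputable def pSet (p : (L.elementaryDiagram M).CompleteType (Fin 1)) (m : ℕ)
    (φ : L.Formula (Fin 1 ⊕ Fin m)) : Set (Fin m → M) :=
  {b | instSent m φ b ∈ p}

/-- Realization only depends on free variables. -/
theorem realize_congr_freeVar {α : Type*} [DecidableEq α] {N : Type*} [L.Structure N]
    (χ : L.BoundedFormula α 0) {v w : α → N} (h : ∀ x ∈ χ.freeVarFinset, v x = w x)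
    (xs : Fin 0 → N) : χ.Realize v xs ↔ χ.Realize w xs := by
  have hsub : ↑χ.freeVarFinset ⊆ (↑χ.freeVarFinset : Set α) := Set.Subset.rfl
  rw [← BoundedFormula.realize_restrictFreeVar' hsub (v := v) (xs := xs),
    ← BoundedFormula.realize_restrictFreeVar' hsub (v := w) (xs := xs)]
  have : v ∘ ((↑) : (↑χ.freeVarFinset : Set α) → α) = w ∘ (↑) := by
    funext x
    exact h x.1 (by exact_mod_cast x.2)
  rw [this]

end StabilityAux

namespace StabilityAux2

open StabilityAux

variable {L : FirstOrder.Language.{u, u}} {T : L.Theory} {M : T.ModelType}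

set_option maxHeartbeats 1000000 in
theorem key_finsat (p : (L.elementaryDiagram M).CompleteType (Fin 1)) (m : ℕ)
    (φ : L.Formula (Fin 1 ⊕ Fin m)) (C : Finset (Fin m → M)) :
    ∃ a : (M : Type u), ∀ b ∈ C,
      (φ.Realize (Sum.elim (fun _ : Fin 1 => a) b) ↔ b ∈ pSet p m φ) := by
  classical
  have hsat : Theory.IsSatisfiable ((p : (L[[(M : Type u)]][[Fin 1]]).Theory)) := p.isMaximal.1
  let NM := hsat.some
  letI i1 : (L[[(M : Type u)]]).Structure NM :=
    ((L[[(M : Type u)]]).lhomWithConstants (Fin 1)).reduct NM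
  letI i0 : L.Structure NM := (L.lhomWithConstants (M : Type u)).reduct NM
  haveI hpmod : (NM : Type u) ⊨ ((p : (L[[(M : Type u)]][[Fin 1]]).Theory)) := NM.is_model
  haveI hMod : (NM : Type u) ⊨ ((L[[(M : Type u)]]).lhomWithConstants (Fin 1)).onTheory
      (L.elementaryDiagram (M : Type u)) := hpmod.mono p.subset
  haveI hMod2 : (NM : Type u) ⊨ L.elementaryDiagram (M : Type u) :=
    (@LHom.onTheory_model _ _ (NM : Type u) i1 _
      ((L[[(M : Type u)]]).lhomWithConstants (Fin 1))
      (LHom.isExpansionOn_reduct ((L[[(M : Type u)]]).lhomWithConstants (Fin 1)) (NM : Type u))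
      (L.elementaryDiagram (M : Type u))).1 hMod
  haveI iexp0 : (L.lhomWithConstants (M : Type u)).IsExpansionOn (NM : Type u) :=
    LHom.isExpansionOn_reduct (L.lhomWithConstants (M : Type u)) (NM : Type u)
  haveI iexp1 : ((L[[(M : Type u)]]).lhomWithConstants (Fin 1)).IsExpansionOn (NM : Type u) :=
    LHom.isExpansionOn_reduct ((L[[(M : Type u)]]).lhomWithConstants (Fin 1)) (NM : Type u)
  let e : (M : Type u) ↪ₑ[L] NM :=
    ElementaryEmbedding.ofModelsElementaryDiagram L (M : Type u) NM
  -- membership in p is truth in NM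
  have hmem : ∀ σ : (L[[(M : Type u)]][[Fin 1]]).Sentence, σ ∈ p ↔ (NM : Type u) ⊨ σ := by
    intro σ
    constructor
    · intro h
      exact Theory.realize_sentence_of_mem (M := (NM : Type u))
        (p : (L[[(M : Type u)]][[Fin 1]]).Theory) h
    · intro h
      by_contra hn
      have := Theory.realize_sentence_of_mem (M := (NM : Type u))
        (p : (L[[(M : Type u)]][[Fin 1]]).Theory) ((p.mem_or_not_mem σ).resolve_left hn)
      exact this h
  -- realization of instance sentences
  have hreal_inst : ∀ (b : Fin m → M),
      ((NM : Type u) ⊨ instSent m φ b ↔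
        φ.Realize (Sum.elim (fun v : Fin 1 => ((L[[(M : Type u)]]).con v : NM))
          (fun j => ((L.con (b j)) : NM)))) := by
    intro b
    set χ : L.BoundedFormula ((M : Type u) ⊕ Fin 1) 0 := φ.relabel (gmap m b) with hχ
    set w : ((M : Type u) ⊕ Fin 1) → NM :=
      Sum.elim (fun a : (M : Type u) => ((L.con a) : NM))
        (fun v : Fin 1 => ((L[[(M : Type u)]]).con v : NM)) with hw
    have e1 : ((NM : Type u) ⊨ instSent m φ b) ↔
        Formula.Realize (BoundedFormula.constantsVarsEquiv.symm χ)
          (fun a : Fin 1 => ((L[[(M : Type u)]]).con a : NM)) :=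
      Formula.realize_equivSentence _ _
    have e2 : Formula.Realize (BoundedFormula.constantsVarsEquiv.symm χ)
        (fun a : Fin 1 => ((L[[(M : Type u)]]).con a : NM)) ↔
        BoundedFormula.Realize χ w (default : Fin 0 → NM) := by
      have h0 := BoundedFormula.realize_constantsVarsEquiv (L := L) (α := (M : Type u))
        (M := (NM : Type u)) (φ := BoundedFormula.constantsVarsEquiv.symm χ)
        (v := fun a : Fin 1 => ((L[[(M : Type u)]]).con a : NM)) (xs := (default : Fin 0 → NM))
      rw [Equiv.apply_symm_apply] at h0
      exact h0.symm
    have e3 : BoundedFormula.Realize χ w (default : Fin 0 → NM) ↔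
        φ.Realize (w ∘ gmap m b) := by
      have := Formula.realize_relabel (φ := φ) (g := gmap m b) (v := w) (M := (NM : Type u))
      exact this
    have e4 : (w ∘ gmap m b) = Sum.elim (fun v : Fin 1 => ((L[[(M : Type u)]]).con v : NM))
        (fun j => ((L.con (b j)) : NM)) := by
      funext x
      cases x <;> rfl
    rw [e1, e2, e3, e4]
  -- the finite conjunction with an existential, transferred along e
  let γC := {b // b ∈ C}
  let ψ : γC → L.Formula (Fin 1 ⊕ (γC × Fin m)) := fun c =>
    φ.relabel (Sum.map id (fun j => (c, j)))
  let ψ' : γC → L.Formula (Fin 1 ⊕ (γC × Fin m)) := fun c =>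
    if (c : Fin m → M) ∈ pSet p m φ then ψ c else (ψ c).not
  let conj : L.Formula (Fin 1 ⊕ (γC × Fin m)) := BoundedFormula.iInf (fun c : γC => ψ' c)
  let Θ : L.Formula (γC × Fin m) := (conj.relabel (Sum.elim Sum.inr Sum.inl)).iExs (Fin 1)
  let xN : Fin 1 → NM := fun v => ((L[[(M : Type u)]]).con v : NM)
  let vN : γC × Fin m → NM := fun q => e (q.1.1 q.2)
  have hNθ : Θ.Realize vN := by
    rw [Formula.realize_iExs]
    refine ⟨xN, ?_⟩
    rw [Formula.realize_relabel, Function.comp_def]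
    have hass : (fun a : Fin 1 ⊕ (γC × Fin m) =>
        Sum.elim vN xN (Sum.elim Sum.inr Sum.inl a)) = Sum.elim xN vN := by
      funext x; cases x <;> rfl
    rw [hass]
    rw [show (Formula.Realize conj (Sum.elim xN vN) : Prop) =
      BoundedFormula.Realize conj (Sum.elim xN vN) default from rfl]
    rw [BoundedFormula.realize_iInf]
    intro c
    have hasg : ((Sum.elim xN vN) ∘ (Sum.map id (fun j => (c, j)))) =
        Sum.elim xN (fun j => e ((c : Fin m → M) j)) := by
      funext x; cases x <;> rfl
    have hsub : BoundedFormula.Realize (ψ c) (Sum.elim xN vN) (default : Fin 0 → NM) ↔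
        ((NM : Type u) ⊨ instSent m φ (c : Fin m → M)) := by
      rw [show (BoundedFormula.Realize (ψ c) (Sum.elim xN vN) (default : Fin 0 → NM) : Prop) =
        (Formula.Realize (ψ c) (Sum.elim xN vN) : Prop) from rfl]
      rw [show (ψ c : L.Formula (Fin 1 ⊕ (γC × Fin m))) =
        φ.relabel (Sum.map id (fun j => (c, j))) from rfl]
      rw [Formula.realize_relabel, hasg, hreal_inst (c : Fin m → M)]
      have heq : (Sum.elim xN fun j => e ((c : Fin m → M) j)) =
          (Sum.elim (fun v : Fin 1 => ((L[[(M : Type u)]]).con v : NM))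
            fun j => ((L.con ((c : Fin m → M) j)) : NM)) := by
        funext x; cases x <;> rfl
      rw [heq]
    by_cases hcS : (c : Fin m → M) ∈ pSet p m φ
    · rw [show (ψ' c : L.Formula (Fin 1 ⊕ (γC × Fin m))) = ψ c from if_pos hcS]
      exact hsub.2 ((hmem _).1 hcS)
    · rw [show (ψ' c : L.Formula (Fin 1 ⊕ (γC × Fin m))) = (ψ c).not from if_neg hcS]
      rw [show (BoundedFormula.Realize (ψ c).not (Sum.elim xN vN) (default : Fin 0 → NM) : Prop) =
        (¬ BoundedFormula.Realize (ψ c) (Sum.elim xN vN) (default : Fin 0 → NM) : Prop) from rfl]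
      intro hcon
      exact hcS ((hmem _).2 (hsub.1 hcon))
  -- transfer to M
  have hMθ : Θ.Realize (fun q : γC × Fin m => ((q.1 : Fin m → M) q.2)) := by
    have hmf := e.map_formula Θ (fun q : γC × Fin m => ((q.1 : Fin m → M) q.2))
    exact hmf.1 hNθ
  rw [Formula.realize_iExs] at hMθ
  simp only [Formula.realize_relabel, Function.comp_def] at hMθ
  obtain ⟨i, hi⟩ := hMθ
  refine ⟨i 0, ?_⟩
  intro b hb
  have hieq : i = fun _ : Fin 1 => i 0 := funext fun v => by rw [Subsingleton.elim v 0]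
  have hass2 : (fun a : Fin 1 ⊕ (γC × Fin m) =>
      Sum.elim (fun q : γC × Fin m => ((q.1 : Fin m → M) q.2)) i
        (Sum.elim Sum.inr Sum.inl a)) =
      Sum.elim i (fun q : γC × Fin m => ((q.1 : Fin m → M) q.2)) := by
    funext x; cases x <;> rfl
  rw [hass2] at hi
  rw [show (Formula.Realize conj
      (Sum.elim i (fun q : γC × Fin m => ((q.1 : Fin m → M) q.2))) : Prop) =
    BoundedFormula.Realize conj
      (Sum.elim i (fun q : γC × Fin m => ((q.1 : Fin m → M) q.2))) default from rfl] at hi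
  rw [BoundedFormula.realize_iInf] at hi
  have hc := hi ⟨b, hb⟩
  have hasg2 : ((Sum.elim i (fun q : γC × Fin m => ((q.1 : Fin m → M) q.2))) ∘
      (Sum.map id (fun j => ((⟨b, hb⟩ : γC), j)))) = Sum.elim (fun _ : Fin 1 => i 0) b := by
    funext x
    cases x with
    | inl v => simp only [Sum.map_inl, Sum.elim_inl, Function.comp_apply, id]
               rw [Subsingleton.elim v 0]
    | inr j => rfl
  have hsubM : BoundedFormula.Realize (ψ (⟨b, hb⟩ : γC))
      (Sum.elim i (fun q : γC × Fin m => ((q.1 : Fin m → M) q.2))) (default : Fin 0 → M) ↔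
      φ.Realize (Sum.elim (fun _ : Fin 1 => i 0) b) := by
    rw [show (BoundedFormula.Realize (ψ (⟨b, hb⟩ : γC))
        (Sum.elim i (fun q : γC × Fin m => ((q.1 : Fin m → M) q.2)))
        (default : Fin 0 → M) : Prop) =
      (Formula.Realize (ψ (⟨b, hb⟩ : γC))
        (Sum.elim i (fun q : γC × Fin m => ((q.1 : Fin m → M) q.2))) : Prop) from rfl]
    rw [show (ψ (⟨b, hb⟩ : γC) : L.Formula (Fin 1 ⊕ (γC × Fin m))) =
      φ.relabel (Sum.map id (fun j => ((⟨b, hb⟩ : γC), j))) from rfl]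
    rw [Formula.realize_relabel, hasg2]
  by_cases hbS : b ∈ pSet p m φ
  · rw [show (ψ' (⟨b, hb⟩ : γC) : L.Formula (Fin 1 ⊕ (γC × Fin m))) =
      ψ (⟨b, hb⟩ : γC) from if_pos hbS] at hc
    exact ⟨fun _ => hbS, fun _ => hsubM.1 hc⟩
  · rw [show (ψ' (⟨b, hb⟩ : γC) : L.Formula (Fin 1 ⊕ (γC × Fin m))) =
      (ψ (⟨b, hb⟩ : γC)).not from if_neg hbS] at hc
    have : ¬ φ.Realize (Sum.elim (fun _ : Fin 1 => i 0) b) := fun hr => hc (hsubM.2 hr)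
    exact ⟨fun hr => absurd hr this, fun hS => absurd hS hbS⟩

set_option maxHeartbeats 1000000 in
theorem key_det (σ : (L[[(M : Type u)]][[Fin 1]]).Sentence) :
    ∃ (m : ℕ) (φ : L.Formula (Fin 1 ⊕ Fin m)) (b : Fin m → M),
      ∀ p : (L.elementaryDiagram M).CompleteType (Fin 1), (σ ∈ p ↔ b ∈ pSet p m φ) := by
  classical
  set θ : (L[[(M : Type u)]]).Formula (Fin 1) := Formula.equivSentence.symm σ with hθ
  set χ : L.BoundedFormula ((M : Type u) ⊕ Fin 1) 0 := BoundedFormula.constantsVarsEquiv θ with hχ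
  set l : List (M : Type u) := χ.freeVarFinset.toList.filterMap Sum.getLeft? with hl
  set b : Fin l.length → (M : Type u) := l.get with hb
  set h : ((M : Type u) ⊕ Fin 1) → (Fin 1 ⊕ Fin l.length) :=
    Sum.elim (fun a => if ha : a ∈ l then
      Sum.inr ⟨l.idxOf a, List.idxOf_lt_length_iff.2 ha⟩ else Sum.inl 0)
      (fun v => Sum.inl v) with hh
  set φ : L.Formula (Fin 1 ⊕ Fin l.length) := Formula.relabel h χ with hφ
  refine ⟨l.length, φ, b, ?_⟩
  intro p
  have hid : ∀ x ∈ χ.freeVarFinset, gmap l.length b (h x) = x := by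
    intro x hx
    cases x with
    | inr v => rfl
    | inl a =>
      have ha : a ∈ l := by
        rw [hl, List.mem_filterMap]
        exact ⟨Sum.inl a, by simpa using hx, rfl⟩
      rw [hh]
      simp only [Sum.elim_inl, dif_pos ha]
      rw [gmap]
      simp only [Sum.elim_inr]
      rw [hb]
      congr 1
      exact List.idxOf_get _
  -- per-type model setup
  have hsat : Theory.IsSatisfiable ((p : (L[[(M : Type u)]][[Fin 1]]).Theory)) := p.isMaximal.1
  let NM := hsat.some
  letI i1 : (L[[(M : Type u)]]).Structure NM :=
    ((L[[(M : Type u)]]).lhomWithConstants (Fin 1)).reduct NM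
  letI i0 : L.Structure NM := (L.lhomWithConstants (M : Type u)).reduct NM
  haveI hpmod : (NM : Type u) ⊨ ((p : (L[[(M : Type u)]][[Fin 1]]).Theory)) := NM.is_model
  haveI iexp0 : (L.lhomWithConstants (M : Type u)).IsExpansionOn (NM : Type u) :=
    LHom.isExpansionOn_reduct (L.lhomWithConstants (M : Type u)) (NM : Type u)
  haveI iexp1 : ((L[[(M : Type u)]]).lhomWithConstants (Fin 1)).IsExpansionOn (NM : Type u) :=
    LHom.isExpansionOn_reduct ((L[[(M : Type u)]]).lhomWithConstants (Fin 1)) (NM : Type u)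
  have hmem : ∀ τ : (L[[(M : Type u)]][[Fin 1]]).Sentence, τ ∈ p ↔ (NM : Type u) ⊨ τ := by
    intro τ
    constructor
    · intro hmm
      exact Theory.realize_sentence_of_mem (M := (NM : Type u))
        (p : (L[[(M : Type u)]][[Fin 1]]).Theory) hmm
    · intro hmm
      by_contra hn
      exact (Theory.realize_sentence_of_mem (M := (NM : Type u))
        (p : (L[[(M : Type u)]][[Fin 1]]).Theory) ((p.mem_or_not_mem τ).resolve_left hn)) hmm
  set xN : Fin 1 → NM := fun v => ((L[[(M : Type u)]]).con v : NM) with hxN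
  set W : ((M : Type u) ⊕ Fin 1) → NM :=
    Sum.elim (fun a : (M : Type u) => ((L.con a) : NM)) xN with hW
  -- realization of σ
  have hreal_σ : ((NM : Type u) ⊨ σ) ↔ BoundedFormula.Realize χ W (default : Fin 0 → NM) := by
    conv_lhs => rw [← Equiv.apply_symm_apply Formula.equivSentence σ]
    rw [show ((NM : Type u) ⊨ Formula.equivSentence (Formula.equivSentence.symm σ) : Prop) =
      ((NM : Type u) ⊨ Formula.equivSentence θ : Prop) from rfl]
    rw [Formula.realize_equivSentence]
    have h0 := BoundedFormula.realize_constantsVarsEquiv (L := L) (α := (M : Type u))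
      (M := (NM : Type u)) (φ := θ) (v := xN) (xs := (default : Fin 0 → NM))
    rw [← hχ] at h0
    rw [show (Formula.Realize θ (fun a : Fin 1 => ((L[[(M : Type u)]]).con a : NM)) : Prop) =
      (BoundedFormula.Realize θ xN (default : Fin 0 → NM) : Prop) from rfl]
    exact h0.symm
  -- realization of the instance sentence
  have hreal_inst : ((NM : Type u) ⊨ instSent l.length φ b ↔
      BoundedFormula.Realize χ (W ∘ gmap l.length b ∘ h) (default : Fin 0 → NM)) := by
    rw [instSent, Formula.realize_equivSentence]
    have h0 := BoundedFormula.realize_constantsVarsEquiv (L := L) (α := (M : Type u))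
      (M := (NM : Type u)) (φ := BoundedFormula.constantsVarsEquiv.symm
        (φ.relabel (gmap l.length b)))
      (v := fun a : Fin 1 => ((L[[(M : Type u)]]).con a : NM)) (xs := (default : Fin 0 → NM))
    rw [Equiv.apply_symm_apply] at h0
    rw [show (Formula.Realize (BoundedFormula.constantsVarsEquiv.symm
        (φ.relabel (gmap l.length b)))
        (fun a : Fin 1 => ((L[[(M : Type u)]]).con a : NM)) : Prop) =
      (BoundedFormula.Realize (BoundedFormula.constantsVarsEquiv.symm
        (φ.relabel (gmap l.length b)))
        (fun a : Fin 1 => ((L[[(M : Type u)]]).con a : NM)) (default : Fin 0 → NM) : Prop)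
      from rfl]
    rw [← h0]
    rw [show (BoundedFormula.Realize (φ.relabel (gmap l.length b))
        (Sum.elim (fun a : (M : Type u) => ((L.con a) : NM))
          (fun a : Fin 1 => ((L[[(M : Type u)]]).con a : NM))) (default : Fin 0 → NM) : Prop) =
      (Formula.Realize (φ.relabel (gmap l.length b)) W : Prop) from rfl]
    rw [Formula.realize_relabel, hφ]
    rw [show ((Formula.relabel h χ).Realize (W ∘ gmap l.length b) : Prop) =
      (Formula.Realize (Formula.relabel h χ) (W ∘ gmap l.length b) : Prop) from rfl]
    rw [Formula.realize_relabel]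
    rfl
  -- agreement on free variables
  have hagree : BoundedFormula.Realize χ (W ∘ gmap l.length b ∘ h) (default : Fin 0 → NM) ↔
      BoundedFormula.Realize χ W (default : Fin 0 → NM) := by
    refine realize_congr_freeVar χ ?_ _
    intro x hx
    simp only [Function.comp_apply]
    rw [hid x hx]
  rw [hmem σ, hreal_σ, show (b ∈ pSet p l.length φ) = (instSent l.length φ b ∈ p) from rfl,
    hmem (instSent l.length φ b), hreal_inst, hagree]

end StabilityAux2


set_option maxHeartbeats 1000000 in
/-- If `T` is stable (no formula has the order property), then for every infinite cardinal
`λ` with `λ = λ ^ max(|L|, ℵ₀)` and every model `M` of `T` of cardinality at most `λ`,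
there are at most `λ` complete 1-types over `M`. -/
theorem type_counting_of_stable {L : FirstOrder.Language.{u, u}}
    (T : L.Theory) (hT : T.IsComplete) (hstable : ¬ T.HasOrderProperty) :
    ∀ lam : Cardinal.{u}, ℵ₀ ≤ lam → lam = lam ^ max L.card ℵ₀ →
      ∀ M : FirstOrder.Language.Theory.ModelType.{u, u, u} T, #M ≤ lam →
        #((L.elementaryDiagram M).CompleteType (Fin 1)) ≤ lam := by
  intro lam hlam hpow M hM
  classical
  have hlam0 : lam ≠ 0 := (aleph0_pos.trans_le hlam).ne'
  set κ : Cardinal.{u} := max L.card ℵ₀ with hκ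
  -- determination lists
  have hdet : ∀ (p : (L.elementaryDiagram M).CompleteType (Fin 1)) (m : ℕ)
      (φ : L.Formula (Fin 1 ⊕ Fin m)),
      ∃ l : List (M : Type u), ∀ b b' : Fin m → M,
        (∀ a ∈ l, ((φ.Realize (Sum.elim (fun _ : Fin 1 => a) b) : Prop) ↔
          φ.Realize (Sum.elim (fun _ : Fin 1 => a) b'))) →
        (b ∈ StabilityAux.pSet p m φ ↔ b' ∈ StabilityAux.pSet p m φ) := by
    intro p m φ
    apply StabilityAux.exists_det (fun a b => φ.Realize (Sum.elim (fun _ : Fin 1 => a) b))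
      (StabilityAux.pSet p m φ)
    · exact StabilityAux2.key_finsat p m φ
    · rintro ⟨a, b, hab⟩
      exact hstable ⟨1, m, φ, M, fun i => fun _ => a i, b, fun i j => hab i j⟩
    · rintro ⟨a, b, hab⟩
      refine hstable ⟨1, m, φ.not, M, fun i => fun _ => a i, b, fun i j => ?_⟩
      rw [Formula.realize_not]
      exact hab i j
  choose dl hdl using hdet
  -- coding
  set Index : Type u := Σ m : ULift.{u} ℕ, L.Formula (Fin 1 ⊕ Fin m.down) with hIndex
  set Code : Type u := List (M : Type u) × ULift.{u} (Set (List Prop)) with hCode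
  set prof : (m : ℕ) → L.Formula (Fin 1 ⊕ Fin m) → List (M : Type u) → (Fin m → M) → List Prop :=
    fun m φ l b => l.map (fun a => (φ.Realize (Sum.elim (fun _ : Fin 1 => a) b) : Prop))
    with hprof
  set code : (L.elementaryDiagram M).CompleteType (Fin 1) → Index → Code := fun p i =>
    ⟨dl p i.1.down i.2,
      ULift.up {q : List Prop | ∃ b ∈ StabilityAux.pSet p i.1.down i.2,
        q = prof i.1.down i.2 (dl p i.1.down i.2) b}⟩ with hcode
  have hinj : Function.Injective code := by
    intro p p' hpq
    have hps : ∀ (m : ℕ) (φ : L.Formula (Fin 1 ⊕ Fin m)),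
        StabilityAux.pSet p m φ = StabilityAux.pSet p' m φ := by
      intro m φ
      have h1 := congrFun hpq ⟨ULift.up m, φ⟩
      have hlist : dl p m φ = dl p' m φ := congrArg Prod.fst h1
      have hQ : {q : List Prop | ∃ b ∈ StabilityAux.pSet p m φ,
            q = prof m φ (dl p m φ) b} =
          {q : List Prop | ∃ b ∈ StabilityAux.pSet p' m φ,
            q = prof m φ (dl p' m φ) b} :=
        congrArg (fun c : Code => c.2.down) h1
      ext b
      constructor
      · intro hb
        have hmemQ : prof m φ (dl p m φ) b ∈
            {q : List Prop | ∃ b ∈ StabilityAux.pSet p m φ, q = prof m φ (dl p m φ) b} :=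
          ⟨b, hb, rfl⟩
        rw [hQ] at hmemQ
        obtain ⟨b', hb', hbeq⟩ := hmemQ
        rw [hlist] at hbeq
        have hpoint : ∀ a ∈ dl p' m φ,
            ((φ.Realize (Sum.elim (fun _ : Fin 1 => a) b') : Prop) ↔
              φ.Realize (Sum.elim (fun _ : Fin 1 => a) b)) := by
          intro a ha
          exact iff_of_eq ((List.map_inj_left.1 hbeq.symm) a ha)
        exact (hdl p' m φ b' b hpoint).1 hb'
      · intro hb
        have hmemQ : prof m φ (dl p' m φ) b ∈
            {q : List Prop | ∃ b ∈ StabilityAux.pSet p' m φ, q = prof m φ (dl p' m φ) b} :=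
          ⟨b, hb, rfl⟩
        rw [← hQ] at hmemQ
        obtain ⟨b', hb', hbeq⟩ := hmemQ
        rw [← hlist] at hbeq
        have hpoint : ∀ a ∈ dl p m φ,
            ((φ.Realize (Sum.elim (fun _ : Fin 1 => a) b') : Prop) ↔
              φ.Realize (Sum.elim (fun _ : Fin 1 => a) b)) := by
          intro a ha
          exact iff_of_eq ((List.map_inj_left.1 hbeq.symm) a ha)
        exact (hdl p m φ b' b hpoint).1 hb'
    apply SetLike.ext
    intro σ
    obtain ⟨m, φ, b, hσ⟩ := StabilityAux2.key_det σ
    rw [hσ p, hσ p', hps m φ]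
  -- cardinality computation
  have h1 : #((L.elementaryDiagram M).CompleteType (Fin 1)) ≤ #(Index → Code) :=
    Cardinal.mk_le_of_injective hinj
  have hCodeCard : #Code ≤ lam := by
    rw [hCode]
    have hprod := Cardinal.mk_prod (List (M : Type u)) (ULift.{u} (Set (List Prop)))
    rw [Cardinal.lift_id, Cardinal.lift_id] at hprod
    rw [hprod]
    have hL1 : #(List (M : Type u)) ≤ lam :=
      (Cardinal.mk_list_le_max _).trans (max_le hlam hM)
    have hL2 : #(ULift.{u} (Set (List Prop))) ≤ lam := by
      rw [Cardinal.mk_uLift, Cardinal.mk_set]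
      have hlp : #(List Prop) ≤ ℵ₀ :=
        (Cardinal.mk_list_le_max _).trans (by
          rw [Cardinal.mk_Prop]
          exact max_le le_rfl ((Cardinal.nat_lt_aleph0 2).le.trans_eq' (by norm_num)))
      have h2 : (2 : Cardinal.{0}) ^ #(List Prop) ≤ (2 : Cardinal.{0}) ^ (ℵ₀ : Cardinal.{0}) :=
        Cardinal.power_le_power_left two_ne_zero hlp
      have h2' : Cardinal.lift.{u} ((2 : Cardinal.{0}) ^ #(List Prop)) ≤
          (2 : Cardinal.{u}) ^ (ℵ₀ : Cardinal.{u}) := by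
        refine le_trans (Cardinal.lift_le.2 h2) ?_
        rw [Cardinal.lift_power, Cardinal.lift_aleph0, Cardinal.lift_ofNat]
      refine h2'.trans ?_
      have h3 : (2 : Cardinal.{u}) ≤ lam := le_trans (by
        have := Cardinal.nat_lt_aleph0.{u} 2
        simpa using this.le) hlam
      calc (2 : Cardinal.{u}) ^ (ℵ₀ : Cardinal.{u}) ≤ lam ^ (ℵ₀ : Cardinal.{u}) :=
            Cardinal.power_le_power_right h3
        _ ≤ lam ^ κ := Cardinal.power_le_power_left hlam0 (le_max_right _ _)
        _ = lam := hpow.symm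
    calc #(List (M : Type u)) * #(ULift.{u} (Set (List Prop))) ≤ lam * lam :=
          mul_le_mul' hL1 hL2
      _ = lam := Cardinal.mul_eq_self hlam
  have hIndexCard : #Index ≤ κ := by
    rw [hIndex]
    have hsig := Cardinal.mk_sigma (fun m : ULift.{u} ℕ => L.Formula (Fin 1 ⊕ Fin m.down))
    rw [hsig]
    have hform : ∀ m : ULift.{u} ℕ, #(L.Formula (Fin 1 ⊕ Fin m.down)) ≤ κ := by
      intro m
      have hinj2 : Function.Injective
          (fun φ : L.Formula (Fin 1 ⊕ Fin m.down) =>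
            (⟨0, φ⟩ : Σ n, L.BoundedFormula (Fin 1 ⊕ Fin m.down) n)) := by
        intro x y hxy
        simpa using hxy
      refine le_trans (Cardinal.mk_le_of_injective hinj2) ?_
      refine le_trans FirstOrder.Language.BoundedFormula.card_le ?_
      have hα : Cardinal.lift.{u} #(Fin 1 ⊕ Fin m.down) ≤ ℵ₀ := by
        rw [Cardinal.mk_sum]
        simp only [Cardinal.mk_fin, Cardinal.lift_natCast]
        rw [Cardinal.lift_add, Cardinal.lift_natCast, Cardinal.lift_natCast]
        exact le_of_lt (Cardinal.add_lt_aleph0 (Cardinal.nat_lt_aleph0 1)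
          (Cardinal.nat_lt_aleph0 m.down))
      have hcard : Cardinal.lift.{0} L.card = L.card := Cardinal.lift_uzero _
      refine max_le (le_max_right _ _) ?_
      calc Cardinal.lift.{u} #(Fin 1 ⊕ Fin m.down) + Cardinal.lift.{0} L.card
          ≤ ℵ₀ + L.card := by rw [hcard]; exact add_le_add hα le_rfl
        _ ≤ κ + κ := add_le_add (le_max_right _ _) (le_max_left _ _)
        _ = κ := Cardinal.add_eq_self (le_max_right _ _)
    refine le_trans (Cardinal.sum_le_sum _ (fun _ => κ) hform) ?_
    rw [Cardinal.sum_const']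
    have hUN : #(ULift.{u} ℕ) = ℵ₀ := by
      rw [Cardinal.mk_uLift, Cardinal.mk_nat, Cardinal.lift_aleph0]
    rw [hUN]
    calc ℵ₀ * κ ≤ κ * κ := mul_le_mul' (le_max_right _ _) le_rfl
      _ = κ := Cardinal.mul_eq_self (le_max_right _ _)
  have h2 : #(Index → Code) ≤ lam := by
    rw [← Cardinal.power_def]
    calc #Code ^ #Index ≤ lam ^ #Index := Cardinal.power_le_power_right hCodeCard
      _ ≤ lam ^ κ := Cardinal.power_le_power_left hlam0 hIndexCard
      _ = lam := hpow.symm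
  exact h1.trans h2
end

section
/- Let M₁ be an elementary submodel of M₂ (both models of a complete first-order theory T) and let a, b be elements of M₂. Then a and b realize the same complete type over M₁ if and only if there exist an elementary extension N of M₂ and an automorphism f of N which fixes M₁ pointwise (f ↾ M₁ is the identity) and maps a to b. -/
open FirstOrder Cardinal

universe u

namespace SameTypeAux

open FirstOrder.Language

variable {L : FirstOrder.Language.{u, u}}

lemma realize_congr_freeVar {M : Type*} [L.Structure M] {α : Type*} [DecidableEq α]
    (φ : L.Formula α) {v w : α → M} (h : ∀ c ∈ φ.freeVarFinset, v c = w c) :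
    φ.Realize v ↔ φ.Realize w := by
  have h1 := BoundedFormula.realize_restrictFreeVar' (M := M)
    (φ := φ) (s := (↑φ.freeVarFinset : Set α)) subset_rfl (v := v) (xs := default)
  have h2 := BoundedFormula.realize_restrictFreeVar' (M := M)
    (φ := φ) (s := (↑φ.freeVarFinset : Set α)) subset_rfl (v := w) (xs := default)
  have e : (v ∘ (↑) : (↑φ.freeVarFinset : Set α) → M) = w ∘ (↑) := by
    funext c
    exact h c (Finset.mem_coe.1 c.2)
  unfold Formula.Realize
  rw [← h1, ← h2, e]

/-- Transfer same-type hypotheses from `Fin`-indexed formulas to arbitrary index types. -/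
lemma realize_transfer_of_fin {B C : Type u} [L.Structure B] [L.Structure C]
    {ι : Type u} [Nonempty ι] (x : ι → B) (y : ι → C)
    (hFin : ∀ (n : ℕ) (φ : L.Formula (Fin n)) (v : Fin n → ι),
      φ.Realize (x ∘ v) ↔ φ.Realize (y ∘ v))
    (α : Type u) (φ : L.Formula α) (wv : α → ι) :
    φ.Realize (x ∘ wv) ↔ φ.Realize (y ∘ wv) := by
  classical
  set s : Finset α := φ.freeVarFinset with hs
  set n : ℕ := s.card
  have e : (s : Type u) ≃ Fin n := s.equivFin
  set j₀ : ι := Classical.arbitrary ι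
  set r : α → Fin (n + 1) := fun a => if h : a ∈ s then (e ⟨a, h⟩).succ else 0 with hr
  set ψ : L.Formula (Fin (n + 1)) := φ.relabel r
  set vv : Fin (n + 1) → ι := Fin.cases j₀ (fun i => wv ↑(e.symm i)) with hvv
  have hre : ∀ (M : Type u) (_ : L.Structure M) (u : α → M) (hcomp : ∀ a ∈ s, u a = u a),
      True := fun _ _ _ _ => trivial
  have key : ∀ (M : Type u) (SM : L.Structure M) (z : ι → M),
      ψ.Realize (z ∘ vv) ↔ φ.Realize (z ∘ wv) := by
    intro M SM z
    rw [Formula.realize_relabel]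
    exact realize_congr_freeVar φ (fun c hc => by
      simp only [Function.comp_apply, hr]
      rw [dif_pos hc]
      simp [hvv])
  rw [← key B _ x, ← key C _ y]
  exact hFin (n+1) ψ vv

/-- Equality transfer. -/
lemma eq_transfer {B C : Type u} [L.Structure B] [L.Structure C]
    {ι : Type u} (x : ι → B) (y : ι → C)
    (hxy : ∀ (α : Type u) (φ : L.Formula α) (w : α → ι),
      φ.Realize (x ∘ w) ↔ φ.Realize (y ∘ w))
    {j j' : ι} (h : y j = y j') : x j = x j' := by
  classical
  have := hxy (ULift.{u} (Fin 2))
    (Term.equal (Term.var (ULift.up 0)) (Term.var (ULift.up 1)))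
    (fun i => if i.down = 0 then j else j')
  simp only [Formula.realize_equal, Term.realize_var, Function.comp_apply] at this
  simpa using this.2 (by simpa using h)

lemma exists_glue_map {B C : Type u} [L.Structure B] [L.Structure C]
    [Nonempty B] [Nonempty C] {ι : Type u} [Nonempty ι] (x : ι → B) (y : ι → C)
    (hxy : ∀ (α : Type u) (φ : L.Formula α) (w : α → ι),
      φ.Realize (x ∘ w) ↔ φ.Realize (y ∘ w))
    (θ : L.Formula C) (hθ : θ.Realize (fun c => c)) (J : Finset ι) :
    ∃ g : C → B, (∀ j ∈ J, g (y j) = x j) ∧ θ.Realize g := by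
  classical
  set s : Finset C := θ.freeVarFinset ∪ J.image y with hs
  set K : Finset C := s.filter (fun c => ∃ j ∈ J, y j = c) with hKdef
  set G' : Finset C := s.filter (fun c => ¬ ∃ j ∈ J, y j = c) with hGdef
  have hKex : ∀ u : {c // c ∈ K}, ∃ j, j ∈ J ∧ y j = ↑u := by
    intro u
    have := (Finset.mem_filter.1 u.2).2
    tauto
  choose jf hjf1 hjf2 using hKex
  set j₀ : ι := Classical.arbitrary ι
  set wm : Option {c // c ∈ K} → ι := fun o => o.elim j₀ jf with hwm
  set fm : C → (Option {c // c ∈ K}) ⊕ {c // c ∈ G'} := fun c =>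
    if h : c ∈ K then Sum.inl (some ⟨c, h⟩)
    else if h' : c ∈ G' then Sum.inr ⟨c, h'⟩ else Sum.inl none with hfm
  set χ : L.Formula (Option {c // c ∈ K}) := (θ.relabel fm).iExs {c // c ∈ G'} with hχ
  have hC : χ.Realize (y ∘ wm) := by
    rw [hχ, Formula.realize_iExs]; simp only [Formula.realize_relabel]
    refine ⟨fun u => ↑u, (realize_congr_freeVar θ ?_).2 hθ⟩
    intro c hc
    have hcs : c ∈ s := Finset.mem_union_left _ hc
    by_cases h : c ∈ K
    · simp only [hfm, dif_pos h, Sum.elim_inl, Function.comp_apply, hwm, Option.elim]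
      exact hjf2 ⟨c, h⟩
    · have hnp : ¬ ∃ j ∈ J, y j = c := fun hP => h (Finset.mem_filter.2 ⟨hcs, hP⟩)
      have h' : c ∈ G' := Finset.mem_filter.2 ⟨hcs, hnp⟩
      simp only [hfm, dif_neg h, dif_pos h', Sum.elim_inr, Function.comp_apply]
  have hB := (hxy _ χ wm).2 hC
  rw [hχ, Formula.realize_iExs] at hB; simp only [Formula.realize_relabel] at hB
  obtain ⟨iw, hiw⟩ := hB
  refine ⟨fun c => Sum.elim (x ∘ wm) iw (fm c), ?_, hiw⟩
  intro j hj
  have hyj : y j ∈ K := Finset.mem_filter.2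
    ⟨Finset.mem_union_right _ (Finset.mem_image_of_mem y hj), ⟨j, hj, rfl⟩⟩
  simp only [hfm, dif_pos hyj, Sum.elim_inl, Function.comp_apply, hwm, Option.elim]
  exact eq_transfer x y hxy (hjf2 ⟨y j, hyj⟩)

lemma exists_amalgam (B C : Type u) [L.Structure B] [L.Structure C]
    [Nonempty B] [Nonempty C] (ι : Type u) [Nonempty ι] (x : ι → B) (y : ι → C)
    (hxy : ∀ (α : Type u) (φ : L.Formula α) (w : α → ι),
      φ.Realize (x ∘ w) ↔ φ.Realize (y ∘ w)) :
    ∃ (D : Type u) (_ : L.Structure D) (_ : Nonempty D)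
      (k : B ↪ₑ[L] D) (l : C ↪ₑ[L] D), ∀ i, k (x i) = l (y i) := by
  classical
  -- the big language
  set ψmap : L[[C]] →ᴸ (L[[B]])[[C]] := (L.lhomWithConstants B).addConstants C with hψmap
  set eqSent : ι → ((L[[B]])[[C]]).Sentence := fun i =>
    Term.equal (Constants.term (Sum.inl (L.con (x i)))) (Constants.term ((L[[B]]).con (y i)))
    with heq
  set T1 : ((L[[B]])[[C]]).Theory :=
    ((L[[B]]).lhomWithConstants C).onTheory (L.elementaryDiagram B) with hT1
  set TD : (Finset ((L[[C]]).Sentence) × Finset ι) → ((L[[B]])[[C]]).Theory := fun p =>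
    T1 ∪ (ψmap.onTheory (↑p.1 ∩ L.elementaryDiagram C)) ∪ (eqSent '' ↑p.2) with hTD
  have hdir : Directed (· ⊆ ·) TD := by
    intro p q
    refine ⟨(p.1 ∪ q.1, p.2 ∪ q.2), ?_, ?_⟩ <;>
    · apply Set.union_subset_union
      · apply Set.union_subset_union subset_rfl
        apply Set.image_mono
        apply Set.inter_subset_inter_left
        simp only [Finset.coe_union]
        first
        | exact Set.subset_union_left
        | exact Set.subset_union_right
      · apply Set.image_mono
        simp only [Finset.coe_union]
        first
        | exact Set.subset_union_left
        | exact Set.subset_union_right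
  have hsatTD : ∀ p, (TD p).IsSatisfiable := by
    intro p
    set s₁ : Finset ((L[[C]]).Sentence) := p.1.filter (· ∈ L.elementaryDiagram C) with hs₁
    set θ : L.Formula C := BoundedFormula.iInf (fun σ : s₁ => Formula.equivSentence.symm (σ : (L[[C]]).Sentence)) with hθdef
    have hcon : (fun a => ((L.con a : (L[[C]]).Constants) : C)) = fun c : C => c := rfl
    have hθ : θ.Realize (fun c : C => c) := by
      have : ∀ σ ∈ s₁, (Formula.equivSentence.symm σ).Realize (fun c : C => c) := by
        intro σ hσ
        have hmem : σ ∈ L.elementaryDiagram C := (Finset.mem_filter.1 hσ).2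
        have := (Formula.realize_equivSentence_symm_con C σ).2 hmem
        rwa [hcon] at this
      rw [hθdef]
      unfold Formula.Realize
      rw [BoundedFormula.realize_iInf]
      exact fun b => this b b.2
    obtain ⟨g, hg1, hg2⟩ := exists_glue_map x y hxy θ hθ p.2
    letI : (constantsOn C).Structure B := constantsOn.structure g
    have hgcon : (fun a => ((L.con a : (L[[C]]).Constants) : B)) = g := rfl
    have hmodel : B ⊨ TD p := by
      rw [Theory.model_iff]
      rintro σ (hσ | hσ)
      · rcases hσ with (hσ | hσ)
        · obtain ⟨σ₀, hσ₀, rfl⟩ := hσ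
          exact (LHom.realize_onSentence (M := B) ((L[[B]]).lhomWithConstants C) σ₀).2 hσ₀
        · obtain ⟨σ₀, hσ₀, rfl⟩ := hσ
          refine (LHom.realize_onSentence (M := B) ψmap σ₀).2 ?_
          have hσs : σ₀ ∈ s₁ := Finset.mem_filter.2 ⟨Finset.mem_coe.1 hσ₀.1, hσ₀.2⟩
          have : (Formula.equivSentence.symm σ₀).Realize g := by
            have := hg2
            rw [hθdef] at this
            unfold Formula.Realize at this
            rw [BoundedFormula.realize_iInf] at this
            exact this ⟨σ₀, hσs⟩
          rw [← hgcon] at this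
          exact (Formula.realize_equivSentence_symm_con B σ₀).1 this
      · obtain ⟨i, hi, rfl⟩ := hσ
        simp only [heq, Sentence.Realize, Formula.realize_equal, Term.realize_constants]
        exact (hg1 i hi).symm
    exact Theory.Model.isSatisfiable B
  have hsat : Theory.IsSatisfiable (⋃ p, TD p) :=
    (Theory.isSatisfiable_directed_union_iff hdir).2 hsatTD
  obtain ⟨D0⟩ := hsat
  letI iBD : (L[[B]]).Structure D0 := ((L[[B]]).lhomWithConstants C).reduct D0
  letI iLD : L.Structure D0 := (L.lhomWithConstants B).reduct D0
  haveI eB : ((L[[B]]).lhomWithConstants C).IsExpansionOn D0 :=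
    LHom.isExpansionOn_reduct _ _
  haveI hmodB : D0 ⊨ L.elementaryDiagram B := by
    refine (LHom.onTheory_model (M := D0) ((L[[B]]).lhomWithConstants C)
      (L.elementaryDiagram B)).1 ?_
    exact Theory.Model.mono D0.is_model (by
      intro σ hσ
      exact Set.mem_iUnion.2 ⟨(∅, ∅), Or.inl (Or.inl hσ)⟩)
  haveI eB2 : (L.lhomWithConstants B).IsExpansionOn D0 := LHom.isExpansionOn_reduct _ _
  let k : B ↪ₑ[L] D0 := ElementaryEmbedding.ofModelsElementaryDiagram L B D0
  letI iCD : (L[[C]]).Structure D0 := ψmap.reduct D0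
  haveI eC : ψmap.IsExpansionOn D0 := LHom.isExpansionOn_reduct _ _
  haveI e2 : (L.lhomWithConstants C).IsExpansionOn D0 := ⟨fun _ _ => rfl, fun _ _ => rfl⟩
  haveI hmodC : D0 ⊨ L.elementaryDiagram C := by
    rw [Theory.model_iff]
    intro σ hσ
    have hmem : ψmap.onSentence σ ∈ ⋃ p, TD p :=
      Set.mem_iUnion.2 ⟨({σ}, ∅), Or.inl (Or.inr ⟨σ, ⟨by simp, hσ⟩, rfl⟩)⟩
    have := Theory.realize_sentence_of_mem (M := D0) (T := ⋃ p, TD p) hmem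
    exact (LHom.realize_onSentence (M := D0) ψmap σ).1 this
  let l : C ↪ₑ[L] D0 := ElementaryEmbedding.ofModelsElementaryDiagram L C D0
  refine ⟨D0, iLD, inferInstance, k, l, ?_⟩
  intro i
  have hmem : eqSent i ∈ ⋃ p, TD p := Set.mem_iUnion.2 ⟨(∅, {i}), Or.inr ⟨i, by simp, rfl⟩⟩
  have := Theory.realize_sentence_of_mem (M := D0) (T := ⋃ p, TD p) hmem
  simp only [heq, Sentence.Realize, Formula.realize_equal, Term.realize_constants] at this
  exact (Term.realize_constants).symm.trans this

/-- A span of two elementary embeddings with common domain. -/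
structure MySpan (L : FirstOrder.Language.{u, u}) : Type (u + 1) where
  P : Type u
  Q : Type u
  SP : L.Structure P
  SQ : L.Structure Q
  NP : Nonempty P
  NQ : Nonempty Q
  h : @FirstOrder.Language.ElementaryEmbedding L P Q SP SQ
  c : @FirstOrder.Language.ElementaryEmbedding L P Q SP SQ

lemma MySpan.exists_next (s : MySpan L) :
    ∃ (D : Type u) (SD : L.Structure D) (_ : Nonempty D)
      (k l : @FirstOrder.Language.ElementaryEmbedding L s.Q D s.SQ SD),
      ∀ p : s.P, k (s.h p) = l (s.c p) := by
  letI := s.SP; letI := s.SQ; haveI := s.NP; haveI := s.NQ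
  exact exists_amalgam s.Q s.Q s.P s.h s.c
    (fun α φ w => (s.h.map_formula φ w).trans (s.c.map_formula φ w).symm)

/-- One step of the amalgamation chain. -/
noncomputable def MySpan.next (s : MySpan L) : MySpan L where
  P := s.Q
  Q := s.exists_next.choose
  SP := s.SQ
  SQ := s.exists_next.choose_spec.choose
  NP := s.NQ
  NQ := s.exists_next.choose_spec.choose_spec.choose
  h := s.exists_next.choose_spec.choose_spec.choose_spec.choose
  c := s.exists_next.choose_spec.choose_spec.choose_spec.choose_spec.choose

lemma MySpan.next_spec (s : MySpan L) : ∀ p : s.P, s.next.h (s.h p) = s.next.c (s.c p) :=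
  s.exists_next.choose_spec.choose_spec.choose_spec.choose_spec.choose_spec

variable (s0 : MySpan L)

/-- The amalgamation chain. -/
noncomputable def chain : ℕ → MySpan L
  | 0 => s0
  | n + 1 => (chain n).next

/-- The carriers of the chain. -/
noncomputable abbrev A (n : ℕ) : Type u := (chain s0 n).P

noncomputable instance instA (n : ℕ) : L.Structure (A s0 n) := (chain s0 n).SP

instance instANonempty (n : ℕ) : Nonempty (A s0 n) := (chain s0 n).NP

/-- `h`-legs of the chain. -/
noncomputable def hh (n : ℕ) : A s0 n ↪ₑ[L] A s0 (n + 1) := (chain s0 n).h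

/-- `c`-legs of the chain. -/
noncomputable def cc (n : ℕ) : A s0 n ↪ₑ[L] A s0 (n + 1) := (chain s0 n).c

lemma key (n : ℕ) : ∀ p : A s0 n, hh s0 (n + 1) (hh s0 n p) = cc s0 (n + 1) (cc s0 n p) :=
  (chain s0 n).next_spec

section NatChain

variable {G : ℕ → Type u} [∀ n, L.Structure (G n)] (st : ∀ n, G n ↪[L] G (n + 1))

lemma natLERec_succ_eq {i j : ℕ} (hij : i ≤ j) (hij' : i ≤ j + 1) (z : G i) :
    DirectedSystem.natLERec st i (j + 1) hij' z = st j (DirectedSystem.natLERec st i j hij z) := by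
  rw [congrFun (DirectedSystem.coe_natLERec st i (j+1) hij') z,
    congrFun (DirectedSystem.coe_natLERec st i j hij) z, Nat.leRecOn_succ hij]

lemma lift_compat {P : Type*} [L.Structure P] (g : ∀ n, G n ↪[L] P)
    (hg : ∀ n z, g (n + 1) (st n z) = g n z) :
    ∀ (i j : ℕ) (hij : i ≤ j) (z : G i),
      g j (DirectedSystem.natLERec st i j hij z) = g i z := by
  intro i j hij z
  induction j, hij using Nat.le_induction with
  | base => rw [Language.DirectedSystem.map_self (fun i j h => DirectedSystem.natLERec st i j h) z]
  | succ j hij ih => rw [natLERec_succ_eq st hij, hg, ih]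

variable (est : ∀ n, G n ↪ₑ[L] G (n + 1))

lemma natLERec_elem (i j : ℕ) (hij : i ≤ j) :
    ∃ e : G i ↪ₑ[L] G j, ∀ z : G i,
      e z = DirectedSystem.natLERec (fun n => (est n).toEmbedding) i j hij z := by
  induction j, hij using Nat.le_induction with
  | base =>
    exact ⟨ElementaryEmbedding.refl L (G i), fun z =>
      (Language.DirectedSystem.map_self (fun i j h =>
        DirectedSystem.natLERec (fun n => (est n).toEmbedding) i j h) z).symm⟩
  | succ j hij ih =>
    obtain ⟨e, he⟩ := ih
    refine ⟨(est j).comp e, fun z => ?_⟩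
    rw [ElementaryEmbedding.comp_apply, he, natLERec_succ_eq (fun n => (est n).toEmbedding) hij]
    rfl

/-- The direct system of a chain. -/
noncomputable abbrev fsys : ∀ i j : ℕ, i ≤ j → G i ↪[L] G j :=
  fun i j h => DirectedSystem.natLERec (fun n => (est n).toEmbedding) i j h

/-- The limit of an elementary chain together with elementarity of `of`. -/
lemma realize_of_iff :
    ∀ {α : Type*} {k : ℕ} (φ : L.BoundedFormula α k) (i : ℕ) (v : α → G i) (xs : Fin k → G i),
      φ.Realize ((DirectLimit.of L ℕ G (fsys est) i) ∘ v)
        ((DirectLimit.of L ℕ G (fsys est) i) ∘ xs)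
      ↔ φ.Realize v xs := by
  intro α k φ
  induction φ with
  | falsum => exact fun i v xs => Iff.rfl
  | equal t₁ t₂ =>
    intro i v xs
    simp only [BoundedFormula.Realize, ← Sum.comp_elim, HomClass.realize_term]
    exact (DirectLimit.of L ℕ G (fsys est) i).injective.eq_iff
  | rel R ts =>
    intro i v xs
    simp only [BoundedFormula.Realize, ← Sum.comp_elim, HomClass.realize_term]
    exact (DirectLimit.of L ℕ G (fsys est) i).map_rel R _
  | imp φ₁ φ₂ ih1 ih2 =>
    intro i v xs
    simp only [BoundedFormula.realize_imp, ih1, ih2]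
  | all φ ih =>
    intro i v xs
    simp only [BoundedFormula.realize_all]
    constructor
    · intro hall z
      have := hall (DirectLimit.of L ℕ G (fsys est) i z)
      rw [← Fin.comp_snoc] at this
      exact (ih i v (Fin.snoc xs z)).1 this
    · intro hall aN
      obtain ⟨j', z', hz⟩ := DirectLimit.exists_of aN
      have hij : i ≤ max i j' := le_max_left _ _
      have hj'j : j' ≤ max i j' := le_max_right _ _
      set j : ℕ := max i j'
      set z : G j := fsys est j' j hj'j z' with hzdef
      have haN : aN = DirectLimit.of L ℕ G (fsys est) j z := by
        rw [hzdef, DirectLimit.of_f, hz]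
      obtain ⟨e, he⟩ := natLERec_elem est i j hij
      have htrans : ∀ w : G j,
          φ.Realize (fsys est i j hij ∘ v) (Fin.snoc (fsys est i j hij ∘ xs) w) := by
        have h1 : (BoundedFormula.all φ).Realize v xs := by
          rw [BoundedFormula.realize_all]; exact hall
        have h2 := (e.map_boundedFormula (BoundedFormula.all φ) v xs).2 h1
        rw [BoundedFormula.realize_all] at h2
        intro w
        have h3 := h2 w
        have hev : (e : G i → G j) ∘ v = fsys est i j hij ∘ v := funext fun c => he (v c)
        have hexs : (e : G i → G j) ∘ xs = fsys est i j hij ∘ xs := funext fun c => he (xs c)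
        rwa [hev, hexs] at h3
      have hgoal := (ih j (fsys est i j hij ∘ v) (Fin.snoc (fsys est i j hij ∘ xs) z)).2 (htrans z)
      rw [Fin.comp_snoc] at hgoal
      have hv : ((DirectLimit.of L ℕ G (fsys est) j) ∘ (fsys est i j hij)) ∘ v
          = (DirectLimit.of L ℕ G (fsys est) i) ∘ v := by
        funext c
        exact DirectLimit.of_f
      have hxs : ((DirectLimit.of L ℕ G (fsys est) j) ∘ (fsys est i j hij)) ∘ xs
          = (DirectLimit.of L ℕ G (fsys est) i) ∘ xs := by
        funext c
        exact DirectLimit.of_f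
      rw [← hv, ← hxs, haN]
      exact hgoal

/-- `of` as an elementary embedding, for chains of elementary embeddings. -/
noncomputable def ofElem (i : ℕ) : G i ↪ₑ[L] Language.DirectLimit G (fsys est) where
  toFun := DirectLimit.of L ℕ G (fsys est) i
  map_formula' := by
    intro n φ xs
    have h1 := realize_of_iff est φ i xs default
    have hd : (DirectLimit.of L ℕ G (fsys est) i) ∘ (default : Fin 0 → G i) = default := by
      funext c; exact c.elim0
    rw [hd] at h1
    exact h1

@[simp]
lemma ofElem_apply (i : ℕ) (z : G i) :
    ofElem est i z = DirectLimit.of L ℕ G (fsys est) i z := rfl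

lemma fsys_succ (n : ℕ) (w : G n) : fsys est n (n + 1) (Nat.le_succ n) w = est n w := by
  rw [natLERec_succ_eq (fun n => (est n).toEmbedding) le_rfl,
    Language.DirectedSystem.map_self (fun i j h =>
      DirectedSystem.natLERec (fun n => (est n).toEmbedding) i j h) w]
  rfl

lemma of_succ (n : ℕ) (w : G n) :
    DirectLimit.of L ℕ G (fsys est) (n + 1) (est n w) = DirectLimit.of L ℕ G (fsys est) n w := by
  rw [← fsys_succ est n w]
  exact DirectLimit.of_f

end NatChain


section Construction

variable (s0 : MySpan L)

noncomputable abbrev Dn (n : ℕ) : Type u := A s0 (2 * n)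

noncomputable abbrev En (n : ℕ) : Type u := A s0 (2 * n + 1)

noncomputable def dstep (n : ℕ) : Dn s0 n ↪ₑ[L] Dn s0 (n + 1) :=
  (cc s0 (2 * n + 1)).comp (cc s0 (2 * n))

noncomputable def estep (n : ℕ) : En s0 n ↪ₑ[L] En s0 (n + 1) :=
  (cc s0 (2 * n + 2)).comp (cc s0 (2 * n + 1))

/-- The two interleaved limits. -/
noncomputable abbrev ND : Type u := Language.DirectLimit (Dn s0) (fsys (dstep s0))

noncomputable abbrev NE : Type u := Language.DirectLimit (En s0) (fsys (estep s0))

noncomputable abbrev ofD (n : ℕ) : Dn s0 n → ND s0 := DirectLimit.of L ℕ (Dn s0) (fsys (dstep s0)) n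

noncomputable abbrev ofE (n : ℕ) : En s0 n → NE s0 := DirectLimit.of L ℕ (En s0) (fsys (estep s0)) n

lemma ofD_succ (n : ℕ) (z : Dn s0 n) : ofD s0 (n + 1) (dstep s0 n z) = ofD s0 n z :=
  of_succ (dstep s0) n z

lemma ofE_succ (n : ℕ) (z : En s0 n) : ofE s0 (n + 1) (estep s0 n z) = ofE s0 n z :=
  of_succ (estep s0) n z

noncomputable def alphaMap : ND s0 ↪[L] NE s0 :=
  Language.DirectLimit.lift L ℕ (Dn s0) (fsys (dstep s0))
    (fun n => (DirectLimit.of L ℕ (En s0) (fsys (estep s0)) n).comp (hh s0 (2 * n)).toEmbedding)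
    (by
      apply lift_compat
      intro n z
      show ofE s0 (n + 1) (hh s0 (2 * n + 2) (cc s0 (2 * n + 1) (cc s0 (2 * n) z)))
        = ofE s0 n (hh s0 (2 * n) z)
      rw [← key s0 (2 * n) z, key s0 (2 * n + 1) (hh s0 (2 * n) z)]
      exact ofE_succ s0 n (hh s0 (2 * n) z))

noncomputable def betaMap : NE s0 ↪[L] ND s0 :=
  Language.DirectLimit.lift L ℕ (En s0) (fsys (estep s0))
    (fun n => (DirectLimit.of L ℕ (Dn s0) (fsys (dstep s0)) (n + 1)).comp
      (hh s0 (2 * n + 1)).toEmbedding)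
    (by
      apply lift_compat
      intro n z
      show ofD s0 (n + 2) (hh s0 (2 * n + 3) (cc s0 (2 * n + 2) (cc s0 (2 * n + 1) z)))
        = ofD s0 (n + 1) (hh s0 (2 * n + 1) z)
      rw [← key s0 (2 * n + 1) z, key s0 (2 * n + 2) (hh s0 (2 * n + 1) z)]
      exact ofD_succ s0 (n + 1) (hh s0 (2 * n + 1) z))

noncomputable def deltaMap : ND s0 ↪[L] NE s0 :=
  Language.DirectLimit.lift L ℕ (Dn s0) (fsys (dstep s0))
    (fun n => (DirectLimit.of L ℕ (En s0) (fsys (estep s0)) n).comp (cc s0 (2 * n)).toEmbedding)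
    (by
      apply lift_compat
      intro n z
      show ofE s0 (n + 1) (cc s0 (2 * n + 2) (cc s0 (2 * n + 1) (cc s0 (2 * n) z)))
        = ofE s0 n (cc s0 (2 * n) z)
      exact ofE_succ s0 n (cc s0 (2 * n) z))

noncomputable def gammaMap : NE s0 ↪[L] ND s0 :=
  Language.DirectLimit.lift L ℕ (En s0) (fsys (estep s0))
    (fun n => (DirectLimit.of L ℕ (Dn s0) (fsys (dstep s0)) (n + 1)).comp
      (cc s0 (2 * n + 1)).toEmbedding)
    (by
      apply lift_compat
      intro n z
      show ofD s0 (n + 2) (cc s0 (2 * n + 3) (cc s0 (2 * n + 2) (cc s0 (2 * n + 1) z)))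
        = ofD s0 (n + 1) (cc s0 (2 * n + 1) z)
      exact ofD_succ s0 (n + 1) (cc s0 (2 * n + 1) z))

lemma alphaMap_of (n : ℕ) (z : Dn s0 n) :
    alphaMap s0 (ofD s0 n z) = ofE s0 n (hh s0 (2 * n) z) :=
  by apply DirectLimit.lift_of

lemma betaMap_of (n : ℕ) (z : En s0 n) :
    betaMap s0 (ofE s0 n z) = ofD s0 (n + 1) (hh s0 (2 * n + 1) z) :=
  by apply DirectLimit.lift_of

lemma deltaMap_of (n : ℕ) (z : Dn s0 n) :
    deltaMap s0 (ofD s0 n z) = ofE s0 n (cc s0 (2 * n) z) :=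
  by apply DirectLimit.lift_of

lemma gammaMap_of (n : ℕ) (z : En s0 n) :
    gammaMap s0 (ofE s0 n z) = ofD s0 (n + 1) (cc s0 (2 * n + 1) z) :=
  by apply DirectLimit.lift_of

lemma gamma_delta (z : ND s0) : gammaMap s0 (deltaMap s0 z) = z := by
  refine DirectLimit.inductionOn z ?_
  intro n z
  rw [deltaMap_of, gammaMap_of]
  exact ofD_succ s0 n z

lemma delta_gamma (z : NE s0) : deltaMap s0 (gammaMap s0 z) = z := by
  refine DirectLimit.inductionOn z ?_
  intro n z
  rw [gammaMap_of, deltaMap_of]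
  exact ofE_succ s0 n z

lemma beta_alpha (z : ND s0) : betaMap s0 (alphaMap s0 z) = z := by
  refine DirectLimit.inductionOn z ?_
  intro n z
  rw [alphaMap_of, betaMap_of, key s0 (2 * n) z]
  exact ofD_succ s0 n z

lemma alpha_beta (z : NE s0) : alphaMap s0 (betaMap s0 z) = z := by
  refine DirectLimit.inductionOn z ?_
  intro n z
  rw [betaMap_of, alphaMap_of]
  show ofE s0 (n + 1) (hh s0 (2 * n + 2) (hh s0 (2 * n + 1) z)) = ofE s0 n z
  rw [key s0 (2 * n + 1) z]
  exact ofE_succ s0 n z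

/-- The automorphism of the limit. -/
noncomputable def limitAuto : ND s0 ≃[L] ND s0 where
  toFun := fun z => gammaMap s0 (alphaMap s0 z)
  invFun := fun z => betaMap s0 (deltaMap s0 z)
  left_inv := fun z => by
    show betaMap s0 (deltaMap s0 (gammaMap s0 (alphaMap s0 z))) = z
    rw [delta_gamma, beta_alpha]
  right_inv := fun z => by
    show gammaMap s0 (alphaMap s0 (betaMap s0 (deltaMap s0 z))) = z
    rw [alpha_beta, gamma_delta]
  map_fun' := by
    intro n f xp
    show gammaMap s0 (alphaMap s0 (Structure.funMap f xp)) = _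
    rw [Embedding.map_fun, Embedding.map_fun]
    rfl
  map_rel' := by
    intro n r xp
    show Structure.RelMap r ((gammaMap s0) ∘ ((alphaMap s0) ∘ xp)) ↔ _
    rw [Embedding.map_rel, Embedding.map_rel]

/-- The elementary embedding of the base into the limit. -/
noncomputable def limitEmb :
    @FirstOrder.Language.ElementaryEmbedding L s0.P (ND s0) s0.SP inferInstance :=
  ofElem (dstep s0) 0

lemma limitAuto_spec (p q : s0.P) (hpq : s0.h p = s0.c q) :
    limitAuto s0 (limitEmb s0 p) = limitEmb s0 q := by
  show gammaMap s0 (alphaMap s0 (ofD s0 0 p)) = ofD s0 0 q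
  rw [alphaMap_of s0 0 p, gammaMap_of]
  have h1 : hh s0 0 p = cc s0 0 q := hpq
  rw [show (hh s0 (2 * 0) p : A s0 1) = cc s0 0 q from h1]
  exact ofD_succ s0 0 q

end Construction


end SameTypeAux

open SameTypeAux FirstOrder.Language in
/-- Two elements `a, b` of a model `M₂` of a complete theory `T` realize the same complete
type over an elementary submodel `M₁` if and only if there are an elementary extension `N`
of `M₂` and an automorphism of `N` fixing `M₁` pointwise and mapping `a` to `b`. -/
theorem same_type_iff_automorphism {L : FirstOrder.Language.{u, u}} (T : L.Theory)
    (hT : T.IsComplete) (M₂ : Type u) [L.Structure M₂] (hM₂ : M₂ ⊨ T)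
    (M₁ : L.ElementarySubstructure M₂) (a b : M₂) :
    (∀ (n : ℕ) (φ : L.Formula (Fin n ⊕ Fin 1)) (c : Fin n → M₁),
        φ.Realize (Sum.elim (fun i => (c i : M₂)) (fun _ => a)) ↔
          φ.Realize (Sum.elim (fun i => (c i : M₂)) (fun _ => b))) ↔
      ∃ (N : Type u) (_ : L.Structure N) (g : M₂ ↪ₑ[L] N) (f : N ≃[L] N),
        (∀ x : M₁, f (g (x : M₂)) = g (x : M₂)) ∧ f (g a) = g b := by
  classical
  constructor
  · intro hsame
    haveI : Nonempty M₂ := ⟨a⟩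
    haveI : Nonempty (M₁ : Type u) := inferInstance
    set x : ((M₁ : Type u) ⊕ Fin 1) → M₂ := Sum.elim (fun m => (m : M₂)) (fun _ => a) with hx
    set y : ((M₁ : Type u) ⊕ Fin 1) → M₂ := Sum.elim (fun m => (m : M₂)) (fun _ => b) with hy
    have hFin : ∀ (m : ℕ) (ψ : L.Formula (Fin m)) (v : Fin m → ((M₁ : Type u) ⊕ Fin 1)),
        ψ.Realize (x ∘ v) ↔ ψ.Realize (y ∘ v) := by
      intro m ψ v
      set r : Fin m → Fin m ⊕ Fin 1 :=
        fun i => Sum.elim (fun _ => Sum.inl i) (fun t => Sum.inr t) (v i) with hr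
      set cmap : Fin m → (M₁ : Type u) :=
        fun i => Sum.elim id (fun _ => Classical.arbitrary _) (v i) with hcmap
      have hA : ψ.Realize (x ∘ v)
          ↔ (ψ.relabel r).Realize (Sum.elim (fun i => ((cmap i : M₂))) (fun _ => a)) := by
        rw [Formula.realize_relabel]
        apply iff_of_eq
        congr 1
        funext i
        rcases hvi : v i with s | t
        · simp [hr, hcmap, hvi, hx]
        · simp [hr, hcmap, hvi, hx]
      have hB : ψ.Realize (y ∘ v)
          ↔ (ψ.relabel r).Realize (Sum.elim (fun i => ((cmap i : M₂))) (fun _ => b)) := by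
        rw [Formula.realize_relabel]
        apply iff_of_eq
        congr 1
        funext i
        rcases hvi : v i with s | t
        · simp [hr, hcmap, hvi, hy]
        · simp [hr, hcmap, hvi, hy]
      rw [hA, hB]
      exact hsame m (ψ.relabel r) cmap
    have hxy := realize_transfer_of_fin x y hFin
    obtain ⟨D, SD, nD, k, l, hglue⟩ := exists_amalgam M₂ M₂ ((M₁ : Type u) ⊕ Fin 1) x y hxy
    set s0 : MySpan L := ⟨M₂, D, inferInstance, SD, ⟨a⟩, nD, k, l⟩ with hs0
    refine ⟨ND s0, inferInstance, limitEmb s0, limitAuto s0, ?_, ?_⟩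
    · intro m
      exact limitAuto_spec s0 (m : M₂) (m : M₂) (hglue (Sum.inl m))
    · exact limitAuto_spec s0 a b (hglue (Sum.inr 0))
  · rintro ⟨N, SN, g, f, hfix, hab⟩ n φ c
    rw [← g.map_formula φ (Sum.elim (fun i => (c i : M₂)) (fun _ => a)),
      ← g.map_formula φ (Sum.elim (fun i => (c i : M₂)) (fun _ => b)),
      ← f.toElementaryEmbedding.map_formula φ
        ((g : M₂ → N) ∘ Sum.elim (fun i => (c i : M₂)) (fun _ => a))]
    apply iff_of_eq
    congr 1
    funext i
    rcases i with s | t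
    · simp only [Function.comp_apply, Sum.elim_inl, Equiv.coe_toElementaryEmbedding]
      exact hfix (c s)
    · simp only [Function.comp_apply, Sum.elim_inr, Equiv.coe_toElementaryEmbedding]
      exact hab
end

section
/- A complete first-order theory T is unstable (some formula has the order property) if and only if some formula has the independence property or some formula has the strict order property. That is: there exist a formula φ(x̄,ȳ), a model M of T, and tuples ā_i, b̄_j (i,j < ω) with M ⊨ φ(ā_i,b̄_j) iff i < j, if and only if either (IP) there exist a formula ψ(x̄,ȳ), a model M of T, and tuples ā_i (i < ω) such that for every subset S ⊆ ω there is a tuple b̄_S in M with M ⊨ ψ(ā_i, b̄_S) iff i ∈ S, or (SOP) there exist a formula χ(x̄,ȳ), a model M of T, and tuples b̄_n (n < ω) such that the definable sets χ(M, b̄_n) = { ā in M : M ⊨ χ(ā, b̄_n) } form a strictly increasing chain: χ(M, b̄_n) ⊊ χ(M, b̄_m) whenever n < m. -/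
open FirstOrder FirstOrder.Language Set

universe u

namespace ShelahAux




lemma exists_strictMono_into (S : Set ℕ) (hS : S.Infinite) :
    ∃ g : ℕ → ℕ, StrictMono g ∧ ∀ i, g i ∈ S := by
  classical
  haveI := hS.to_subtype
  refine ⟨Nat.orderEmbeddingOfSet S, (Nat.orderEmbeddingOfSet S).strictMono, fun i => ?_⟩
  rw [Nat.orderEmbeddingOfSet_apply]
  exact (Nat.Subtype.ofNat S i).2

/-- Infinite Ramsey theorem: every coloring of the strictly increasing `k`-tuples from an
infinite set `H ⊆ ℕ` with finitely many colors admits an infinite homogeneous subset. -/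
theorem ramsey {C : Type} [Finite C] :
    ∀ (k : ℕ) (f : (Fin k → ℕ) → C) (H : Set ℕ), H.Infinite →
      ∃ H' : Set ℕ, H' ⊆ H ∧ H'.Infinite ∧
        ∀ w w' : Fin k → ℕ, StrictMono w → StrictMono w' →
          (∀ i, w i ∈ H') → (∀ i, w' i ∈ H') → f w = f w' := by
  intro k
  induction k with
  | zero =>
    intro f H hH
    exact ⟨H, le_refl _, hH, fun w w' _ _ _ _ => by rw [Subsingleton.elim w w']⟩
  | succ k IH =>
    intro f H hH
    have key : ∀ S : {S : Set ℕ // S.Infinite},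
        ∃ (x : ℕ) (S' : Set ℕ) (c : C), x ∈ S.1 ∧ S'.Infinite ∧ S' ⊆ S.1 ∧ (∀ y ∈ S', x < y) ∧
          ∀ w : Fin k → ℕ, StrictMono w → (∀ i, w i ∈ S') → f (Fin.cons x w) = c := by
      rintro ⟨S, hS⟩
      obtain ⟨x, hx⟩ := hS.nonempty
      have h2 : (S \ Iic x).Infinite := hS.diff (finite_Iic x)
      obtain ⟨S', hsub, hinf, hhom⟩ := IH (fun w => f (Fin.cons x w)) _ h2
      obtain ⟨g, hg, hgmem⟩ := exists_strictMono_into S' hinf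
      refine ⟨x, S', f (Fin.cons x (fun i => g i)), hx, hinf,
        fun y hy => (hsub hy).1, fun y hy => by simpa using (hsub hy).2, fun w hw hwm => ?_⟩
      exact hhom w (fun i => g i) hw (fun i j hij => hg (by exact_mod_cast hij)) hwm
        (fun i => hgmem i)
    choose xf Sf cf hmem hinf hsub hgt hhom using key
    let seq : ℕ → {S : Set ℕ // S.Infinite} := fun nn =>
      Nat.rec ⟨H, hH⟩ (fun _ p => ⟨Sf p, hinf p⟩) nn
    have hseq : ∀ nn, seq (nn + 1) = ⟨Sf (seq nn), hinf (seq nn)⟩ := fun _ => rfl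
    set X : ℕ → ℕ := fun nn => xf (seq nn) with hX
    set CC : ℕ → C := fun nn => cf (seq nn) with hCC
    have fact2 : ∀ nn, (seq (nn + 1)).1 ⊆ (seq nn).1 := fun nn => hsub (seq nn)
    have chain : ∀ a b, a ≤ b → (seq b).1 ⊆ (seq a).1 := by
      intro a b hab
      induction b with
      | zero => simp_all
      | succ b IH2 =>
        rcases Nat.lt_or_ge a (b+1) with h | h
        · exact (IH2 (by omega)).trans' (fact2 b)
        · have : a = b + 1 := by omega
          subst this; exact le_refl _
    have Xmono : StrictMono X := by
      apply strictMono_nat_of_lt_succ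
      intro nn
      exact hgt (seq nn) _ (hmem (seq (nn+1)))
    have Xmem : ∀ a b, a < b → X b ∈ (seq (a+1)).1 := by
      intro a b hab
      exact chain (a+1) b hab (hmem (seq b))
    obtain ⟨c₀, hc₀⟩ := Finite.exists_infinite_fiber CC
    refine ⟨X '' (CC ⁻¹' {c₀}), ?_, ?_, ?_⟩
    · rintro y ⟨nn, _, rfl⟩
      exact chain 0 nn (Nat.zero_le _) (hmem (seq nn))
    · exact (Set.infinite_coe_iff.1 hc₀).image (Xmono.injective.injOn)
    · have main : ∀ w : Fin (k+1) → ℕ, StrictMono w → (∀ i, w i ∈ X '' (CC ⁻¹' {c₀})) →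
          f w = c₀ := by
        intro w hw hwm
        have : ∀ i, ∃ nn, CC nn = c₀ ∧ X nn = w i := by
          intro i; obtain ⟨nn, h1, h2⟩ := hwm i; exact ⟨nn, h1, h2⟩
        choose idx hidx1 hidx2 using this
        have idxmono : StrictMono idx := by
          intro i j hij
          have := hw hij
          rw [← hidx2 i, ← hidx2 j] at this
          exact Xmono.lt_iff_lt.1 this
        have hw0 : w = Fin.cons (X (idx 0)) (Fin.tail w) := by
          rw [hidx2 0, Fin.cons_self_tail]
        rw [hw0]
        rw [hhom (seq (idx 0)) (Fin.tail w)
          (fun i j hij => hw (Fin.succ_lt_succ_iff.2 hij))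
          (fun i => by
            rw [show Fin.tail w i = X (idx i.succ) from (hidx2 i.succ).symm]
            exact Xmem (idx 0) (idx i.succ) (idxmono (Fin.succ_pos i)))]
        exact hidx1 0
      intro w w' hw hw' hwm hwm'
      rw [main w hw hwm, main w' hw' hwm']



theorem multiRamsey (F : ∀ k : ℕ, (Fin k → ℕ) → ((Fin k → Bool) → Prop)) :
    ∀ (K : ℕ) (H : Set ℕ), H.Infinite →
      ∃ H' : Set ℕ, H' ⊆ H ∧ H'.Infinite ∧
        ∀ k, k ≤ K → ∀ w w' : Fin k → ℕ, StrictMono w → StrictMono w' →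
          (∀ i, w i ∈ H') → (∀ i, w' i ∈ H') → F k w = F k w' := by
  intro K
  induction K with
  | zero =>
    intro H hH
    refine ⟨H, le_refl _, hH, fun k hk w w' _ _ _ _ => ?_⟩
    interval_cases k
    rw [Subsingleton.elim w w']
  | succ K IH =>
    intro H hH
    obtain ⟨H₁, hsub₁, hinf₁, hhom₁⟩ := IH H hH
    obtain ⟨H₂, hsub₂, hinf₂, hhom₂⟩ :=
      ramsey (C := (Fin (K+1) → Bool) → Prop) (K+1) (F (K+1)) H₁ hinf₁
    refine ⟨H₂, hsub₂.trans hsub₁, hinf₂, fun k hk w w' hw hw' hwm hwm' => ?_⟩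
    rcases Nat.lt_or_ge k (K+1) with h | h
    · exact hhom₁ k (by omega) w w' hw hw' (fun i => hsub₂ (hwm i)) (fun i => hsub₂ (hwm' i))
    · have : k = K + 1 := by omega
      subst this
      exact hhom₂ w w' hw hw' hwm hwm'

section Strings

variable {k : ℕ}

/-- The number of inversions of a boolean string. -/
noncomputable def inv (s : Fin k → Bool) : ℕ :=
  ((Finset.univ : Finset (Fin k × Fin k)).filter
    (fun pr => pr.1 < pr.2 ∧ s pr.1 = true ∧ s pr.2 = false)).card

lemma monotone_of_inv_zero {s : Fin k → Bool} (h : inv s = 0) : Monotone s := by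
  intro a b hab
  by_contra hc
  have h1 : s a = true ∧ s b = false := by
    revert hc; cases ha : s a <;> cases hb : s b <;> simp
  have hab' : a < b := by
    rcases lt_or_eq_of_le hab with h' | h'
    · exact h'
    · subst h'; rw [h1.1] at h1; exact absurd h1.2 (by simp)
  have : (a, b) ∈ (Finset.univ : Finset (Fin k × Fin k)).filter
      (fun pr => pr.1 < pr.2 ∧ s pr.1 = true ∧ s pr.2 = false) := by
    simp [hab', h1.1, h1.2]
  rw [inv, Finset.card_eq_zero] at h
  simp [h] at this

lemma exists_adjacent_descent {s : Fin k → Bool} (h : ¬ Monotone s) :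
    ∃ (i : ℕ) (h1 : i + 1 < k), s ⟨i, by omega⟩ = true ∧ s ⟨i+1, h1⟩ = false := by
  by_contra hc
  push_neg at hc
  apply h
  have step : ∀ (i : ℕ) (h1 : i + 1 < k), s ⟨i, by omega⟩ ≤ s ⟨i+1, h1⟩ := by
    intro i h1
    have := hc i h1
    cases ha : s ⟨i, by omega⟩ <;> cases hb : s ⟨i+1, h1⟩ <;> simp_all
  set t : ℕ → Bool := fun j => if h : j < k then s ⟨j, h⟩ else true with ht
  have tmono : Monotone t := by
    apply monotone_nat_of_le_succ
    intro j
    by_cases h1 : j + 1 < k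
    · have h0 : j < k := by omega
      simpa [ht, h0, h1] using step j h1
    · by_cases h0 : j < k <;> simp [ht, h0, h1]
  intro a b hab
  have ha : s a = t a.val := by simp [ht, a.isLt]
  have hb : s b = t b.val := by simp [ht, b.isLt]
  rw [ha, hb]
  exact tmono (by exact_mod_cast hab)

lemma swapStr_lt {i : ℕ} (h1 : i + 1 < k) {a b : Fin k} (hab : a < b)
    (hne : ¬ (a = ⟨i, by omega⟩ ∧ b = ⟨i+1, h1⟩)) :
    Equiv.swap (⟨i, by omega⟩ : Fin k) ⟨i+1, h1⟩ a < Equiv.swap (⟨i, by omega⟩ : Fin k) ⟨i+1, h1⟩ b := by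
  set p : Fin k := ⟨i, by omega⟩
  set q : Fin k := ⟨i+1, h1⟩
  have hpq : p ≠ q := by simp [p, q, Fin.ext_iff]
  rw [Fin.lt_def] at hab ⊢
  have ep : ∀ x : Fin k, x = p ↔ x.val = i := by intro x; rw [Fin.ext_iff]
  have eq' : ∀ x : Fin k, x = q ↔ x.val = i + 1 := by intro x; rw [Fin.ext_iff]
  rw [Equiv.swap_apply_def, Equiv.swap_apply_def]
  split_ifs with g1 g2 g3 g4 g5 g6 g7 g8 <;>
    simp only [p, q] at * <;>
    first
      | omega
      | (exfalso; revert hne; rw [ep] at * <;> rw [eq'] at * <;> omega)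
      | (rw [ep] at * <;> rw [eq'] at * <;> omega)
      | (simp only [Fin.ext_iff] at g1 g2 g3 g4 g5 g6 g7 g8 ⊢ <;> omega)

lemma inv_swap_lt {s : Fin k → Bool} {i : ℕ} (h1 : i + 1 < k)
    (hT : s ⟨i, by omega⟩ = true) (hF : s ⟨i+1, h1⟩ = false) :
    inv (s ∘ Equiv.swap (⟨i, by omega⟩ : Fin k) ⟨i+1, h1⟩) < inv s := by
  classical
  set p : Fin k := ⟨i, by omega⟩
  set q : Fin k := ⟨i+1, h1⟩
  set σ := Equiv.swap p q
  have hmaps : ∀ pr ∈ (Finset.univ : Finset (Fin k × Fin k)).filter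
      (fun pr => pr.1 < pr.2 ∧ (s ∘ σ) pr.1 = true ∧ (s ∘ σ) pr.2 = false),
      (σ pr.1, σ pr.2) ∈ ((Finset.univ : Finset (Fin k × Fin k)).filter
      (fun pr => pr.1 < pr.2 ∧ s pr.1 = true ∧ s pr.2 = false)).erase (p, q) := by
    rintro ⟨a, b⟩ hab
    simp only [Finset.mem_filter, Finset.mem_univ, true_and, Function.comp_apply] at hab
    obtain ⟨hab, hsa, hsb⟩ := hab
    have hne : ¬ (a = p ∧ b = q) := by
      rintro ⟨rfl, rfl⟩
      rw [Equiv.swap_apply_left] at hsa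
      rw [hsa] at hF
      exact absurd hF (by simp)
    refine Finset.mem_erase.2 ⟨?_, ?_⟩
    · rintro hc
      have : a = q ∧ b = p := by
        constructor
        · have : σ a = p := (Prod.ext_iff.1 hc).1
          have := congrArg σ this
          simpa [σ, Equiv.swap_apply_left] using this
        · have : σ b = q := (Prod.ext_iff.1 hc).2
          have := congrArg σ this
          simpa [σ, Equiv.swap_apply_right] using this
      rw [this.1, this.2] at hab
      have : (q : Fin k).val < p.val := hab
      simp [p, q] at this
    · simp only [Finset.mem_filter, Finset.mem_univ, true_and]
      exact ⟨swapStr_lt h1 hab hne, hsa, hsb⟩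
  have hinj : Set.InjOn (fun pr : Fin k × Fin k => (σ pr.1, σ pr.2))
      ((Finset.univ : Finset (Fin k × Fin k)).filter
      (fun pr => pr.1 < pr.2 ∧ (s ∘ σ) pr.1 = true ∧ (s ∘ σ) pr.2 = false)) := by
    rintro ⟨a, b⟩ _ ⟨a', b'⟩ _ h
    simp only [Prod.mk.injEq] at h
    exact Prod.ext (σ.injective h.1) (σ.injective h.2)
  have hcard := Finset.card_le_card_of_injOn _ hmaps hinj
  have hmem : (p, q) ∈ (Finset.univ : Finset (Fin k × Fin k)).filter
      (fun pr => pr.1 < pr.2 ∧ s pr.1 = true ∧ s pr.2 = false) := by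
    simp only [Finset.mem_filter, Finset.mem_univ, true_and]
    exact ⟨by simp [p, q, Fin.lt_def], hT, hF⟩
  rw [Finset.card_erase_of_mem hmem] at hcard
  have hpos : 0 < ((Finset.univ : Finset (Fin k × Fin k)).filter
      (fun pr => pr.1 < pr.2 ∧ s pr.1 = true ∧ s pr.2 = false)).card :=
    Finset.card_pos.2 ⟨_, hmem⟩
  unfold inv
  omega

lemma all_of_closed (P : ∀ {k : ℕ}, (Fin k → Bool) → Prop)
    (hmono : ∀ (k : ℕ) (s : Fin k → Bool), Monotone s → P s)
    (hclosed : ∀ (k : ℕ) (s : Fin k → Bool) (i : ℕ) (h1 : i + 1 < k),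
      P s → P (s ∘ Equiv.swap (⟨i, by omega⟩ : Fin k) ⟨i+1, h1⟩)) :
    ∀ (k : ℕ) (s : Fin k → Bool), P s := by
  have main : ∀ (N k : ℕ) (s : Fin k → Bool), inv s ≤ N → P s := by
    intro N
    induction N with
    | zero =>
      intro k s h
      exact hmono k s (monotone_of_inv_zero (Nat.le_zero.1 h))
    | succ N IH =>
      intro k s h
      by_cases hm : Monotone s
      · exact hmono k s hm
      · obtain ⟨i, h1, hT, hF⟩ := exists_adjacent_descent hm
        have hlt := inv_swap_lt h1 hT hF
        have hP : P (s ∘ Equiv.swap (⟨i, by omega⟩ : Fin k) ⟨i+1, h1⟩) :=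
          IH k _ (by omega)
        have := hclosed k _ i h1 hP
        have hss : (s ∘ Equiv.swap (⟨i, by omega⟩ : Fin k) ⟨i+1, h1⟩) ∘
            Equiv.swap (⟨i, by omega⟩ : Fin k) ⟨i+1, h1⟩ = s := by
          funext x
          simp [Function.comp_apply, Equiv.swap_apply_self]
        rwa [hss] at this
  intro k s
  exact main (inv s) k s (le_refl _)

end Strings




variable {L : FirstOrder.Language.{u, u}} {T : L.Theory}

/-- Generic compactness helper: a family of `L`-formulas with variables indexed by `α`, each
finite subfamily of which can be realized in a fixed model `M₀` of `T`, can be simultaneously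
realized in some model of `T`. -/
theorem exists_model_realize {α : Type u} {ι : Type*} (F : ι → L.Formula α)
    (M₀ : Theory.ModelType.{u, u, u} T)
    (h : ∀ s : Finset ι, ∃ v : α → M₀, ∀ i ∈ s, (F i).Realize v) :
    ∃ (N : Theory.ModelType.{u, u, u} T) (c : α → N), ∀ i, (F i).Realize c := by
  classical
  by_cases hι : Nonempty ι
  swap
  · obtain ⟨v, _⟩ := h ∅
    exact ⟨M₀, v, fun i => absurd ⟨i⟩ hι⟩
  inhabit ι
  set T' : L[[α]].Theory :=
    (L.lhomWithConstants α).onTheory T ∪ (Set.range fun i => Formula.equivSentence (F i)) with hT'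
  have hsat : T'.IsSatisfiable := by
    rw [Theory.isSatisfiable_iff_isFinitelySatisfiable]
    intro T0 hT0
    set g : L[[α]].Sentence → ι := fun σ =>
      if hσ : ∃ i, Formula.equivSentence (F i) = σ then hσ.choose else default with hg
    obtain ⟨v, hv⟩ := h (T0.image g)
    letI : (constantsOn α).Structure M₀ := constantsOn.structure v
    have hcon : ∀ a : α, (L.con a : M₀) = v a := fun a => rfl
    have hmod : ∀ σ ∈ T0, M₀ ⊨ σ := by
      intro σ hσ
      rcases hT0 hσ with hσ' | hσ'
      · obtain ⟨ψ, hψT, rfl⟩ := hσ'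
        rw [LHom.realize_onSentence]
        exact M₀.is_model.realize_of_mem ψ hψT
      · obtain ⟨i, rfl⟩ := hσ'
        have hex : ∃ j, Formula.equivSentence (F j) = Formula.equivSentence (F i) := ⟨i, rfl⟩
        have hgdef : g (Formula.equivSentence (F i)) = hex.choose := by
          rw [hg]; exact dif_pos hex
        have hreal : (F hex.choose).Realize v :=
          hv _ (hgdef ▸ Finset.mem_image_of_mem g hσ)
        show M₀ ⊨ Formula.equivSentence (F i)
        rw [← hex.choose_spec, Formula.realize_equivSentence]
        simpa [hcon] using hreal
    haveI : M₀ ⊨ (T0 : L[[α]].Theory) := ⟨fun σ hσ => hmod σ hσ⟩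
    exact Theory.Model.isSatisfiable M₀
  obtain ⟨N'⟩ := hsat
  haveI hN'T : N' ⊨ (L.lhomWithConstants α).onTheory T :=
    N'.is_model.mono Set.subset_union_left
  haveI hN'F : N' ⊨ (Set.range fun i => Formula.equivSentence (F i)) :=
    N'.is_model.mono Set.subset_union_right
  letI strN : L.Structure N' := (L.lhomWithConstants α).reduct N'
  haveI expN : (L.lhomWithConstants α).IsExpansionOn N' :=
    @LHom.isExpansionOn_reduct L _ (L.lhomWithConstants α) N' _
  haveI : @Theory.Model L N' strN T :=
    (@LHom.onTheory_model L _ N' strN _ (L.lhomWithConstants α) expN T).1 hN'T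
  refine ⟨⟨N'.Carrier⟩, fun a => (L.con a : N'), fun i => ?_⟩
  have := hN'F.realize_of_mem (Formula.equivSentence (F i)) ⟨i, rfl⟩
  rwa [Formula.realize_equivSentence] at this





variable {L : FirstOrder.Language.{u, u}} {n m : ℕ}

/-- The formula asserting that `x̄` relates via `φ` to the `j`-th parameter tuple according to
the boolean pattern `s`. -/
noncomputable def patternFormula (φ : L.Formula (Fin n ⊕ Fin m)) (k : ℕ) (s : Fin k → Bool) :
    L.Formula (Fin n ⊕ (Fin k × Fin m)) :=
  BoundedFormula.iInf fun j =>
    if s j then φ.relabel (Sum.map id fun y => (j, y))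
    else (φ.relabel (Sum.map id fun y => (j, y))).not

theorem realize_patternFormula {φ : L.Formula (Fin n ⊕ Fin m)} {k : ℕ} {s : Fin k → Bool}
    {M : Type u} [L.Structure M] {v : Fin n ⊕ (Fin k × Fin m) → M} :
    (patternFormula φ k s).Realize v ↔
      ∀ j : Fin k, (φ.Realize (v ∘ Sum.map id fun y => (j, y)) ↔ s j = true) := by
  have : (patternFormula φ k s).Realize v ↔
      ∀ j ∈ Finset.univ, (BoundedFormula.Realize
        (if s j then φ.relabel (Sum.map id fun y => (j, y))
          else (φ.relabel (Sum.map id fun y => (j, y))).not) v (default : Fin 0 → M)) :=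
    BoundedFormula.realize_iInf.trans (by simp)
  rw [this]
  apply forall_congr'
  intro j
  simp only [Finset.mem_univ, true_implies]
  by_cases hs : s j
  · rw [if_pos hs, hs]
    simp only [iff_true]
    exact Formula.realize_relabel
  · rw [if_neg hs]
    have hs' : s j = false := by simpa using hs
    rw [hs']
    have : BoundedFormula.Realize ((φ.relabel (Sum.map id fun y => (j, y))).not) v
        (default : Fin 0 → M) ↔ ¬ (φ.relabel (Sum.map id fun y => (j, y))).Realize v :=
      Iff.rfl
    rw [this, Formula.realize_relabel]
    simp

/-- Existential closure of `patternFormula` over the `x̄`-variables, with parameter variables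
relabelled by `g`. -/
noncomputable def patternExists (φ : L.Formula (Fin n ⊕ Fin m)) (k : ℕ) (s : Fin k → Bool)
    {β : Type*} (g : Fin k × Fin m → β) : L.Formula β :=
  ((patternFormula φ k s).relabel (Sum.elim (Sum.inr : Fin n → β ⊕ Fin n) (Sum.inl ∘ g))).iExs (Fin n)

theorem realize_patternExists {φ : L.Formula (Fin n ⊕ Fin m)} {k : ℕ} {s : Fin k → Bool}
    {β : Type*} {g : Fin k × Fin m → β} {M : Type u} [L.Structure M] {v : β → M} :
    (patternExists φ k s g).Realize v ↔
      ∃ x : Fin n → M, ∀ j : Fin k,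
        (φ.Realize (Sum.elim x fun y => v (g (j, y))) ↔ s j = true) := by
  rw [patternExists, Formula.realize_iExs]
  apply exists_congr
  intro x
  rw [Formula.realize_relabel, realize_patternFormula]
  apply forall_congr'
  intro j
  have harg : ((fun a => Sum.elim v x (Sum.elim (Sum.inr : Fin n → β ⊕ Fin n) (Sum.inl ∘ g) a)) ∘
      Sum.map id fun y => (j, y)) = Sum.elim x fun y => v (g (j, y)) := by
    funext a
    rcases a with a | a <;> rfl
  erw [harg]





variable {L : FirstOrder.Language.{u, u}} {T : L.Theory} {n m : ℕ}

theorem exists_homogeneous (φ : L.Formula (Fin n ⊕ Fin m)) (M : Theory.ModelType.{u, u, u} T)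
    (a : ℕ → Fin n → M) (b : ℕ → Fin m → M)
    (hab : ∀ i j : ℕ, φ.Realize (Sum.elim (a i) (b j)) ↔ i < j) :
    ∃ (N : Theory.ModelType.{u, u, u} T) (bb : ℚ → Fin m → N),
      (∀ (k : ℕ) (s : Fin k → Bool) (w w' : Fin k → ℚ), StrictMono w → StrictMono w' →
        ((∃ x : Fin n → N, ∀ j, (φ.Realize (Sum.elim x (bb (w j))) ↔ s j = true)) ↔
         (∃ x : Fin n → N, ∀ j, (φ.Realize (Sum.elim x (bb (w' j))) ↔ s j = true)))) ∧
      (∀ (k : ℕ) (s : Fin k → Bool) (w : Fin k → ℚ), Monotone s → StrictMono w →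
        ∃ x : Fin n → N, ∀ j, (φ.Realize (Sum.elim x (bb (w j))) ↔ s j = true)) := by
  classical
  set α₁ : Type u := ULift.{u} (ℚ × Fin m) with hα₁
  set ι₁ : Type :=
    (Σ k : ℕ, (Fin k → Bool) × {w : Fin k → ℚ // StrictMono w} × {w : Fin k → ℚ // StrictMono w})
      ⊕ (Σ k : ℕ, {s : Fin k → Bool // Monotone s} × {w : Fin k → ℚ // StrictMono w}) with hι₁
  set F₁ : ι₁ → L.Formula α₁ := fun idx =>
    Sum.rec
      (fun x => (patternExists φ x.1 x.2.1 (fun p => ⟨(x.2.2.1.1 p.1, p.2)⟩ : _ → α₁)).iff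
        (patternExists φ x.1 x.2.1 (fun p => ⟨(x.2.2.2.1 p.1, p.2)⟩ : _ → α₁)))
      (fun x => patternExists φ x.1 x.2.1.1 (fun p => ⟨(x.2.2.1 p.1, p.2)⟩ : _ → α₁))
      idx with hF₁
  have hfin : ∀ s₀ : Finset ι₁, ∃ v : α₁ → M, ∀ i ∈ s₀, (F₁ i).Realize v := by
    intro s₀
    set karity : ι₁ → ℕ := Sum.elim (fun x => x.1) (fun x => x.1) with hka
    set Qf : ι₁ → Finset ℚ :=
      Sum.elim (fun x => (Finset.univ.image x.2.2.1.1) ∪ (Finset.univ.image x.2.2.2.1))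
        (fun x => Finset.univ.image x.2.2.1) with hQf
    obtain ⟨H', hsubH, hinfH, hom⟩ :=
      multiRamsey
        (fun k w => fun s : Fin k → Bool =>
          ∃ x : Fin n → M, ∀ j, (φ.Realize (Sum.elim x (b (w j))) ↔ s j = true))
        (s₀.sup karity) (Set.Ioi 0) (Set.Ioi_infinite 0)
    obtain ⟨g, hg, hgmem⟩ := exists_strictMono_into H' hinfH
    set Q : Finset ℚ := s₀.sup Qf with hQ
    set h : ℚ → ℕ := fun q =>
      if hq : q ∈ Q then g ((Q.orderIsoOfFin rfl).symm ⟨q, hq⟩) else g 0 with hh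
    have hmem' : ∀ q, h q ∈ H' := by
      intro q
      rw [hh]
      dsimp only
      split <;> exact hgmem _
    have hmono : ∀ q ∈ Q, ∀ q' ∈ Q, q < q' → h q < h q' := by
      intro q hq q' hq' hlt
      rw [hh]
      dsimp only
      rw [dif_pos hq, dif_pos hq']
      apply hg
      apply (Q.orderIsoOfFin rfl).symm.strictMono
      exact Subtype.mk_lt_mk.2 hlt
    have hpos : ∀ q, 0 < h q := fun q => hsubH (hmem' q)
    refine ⟨fun p => b (h p.down.1) p.down.2, ?_⟩
    intro i hi
    have hk : karity i ≤ s₀.sup karity := Finset.le_sup hi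
    have hQi : Qf i ⊆ Q := Finset.le_sup hi
    rcases i with x | x
    · obtain ⟨k, s, ⟨w, hw⟩, ⟨w', hw'⟩⟩ := x
      show (Formula.iff _ _).Realize _
      rw [Formula.realize_iff, realize_patternExists, realize_patternExists]
      have hwQ : ∀ j, w j ∈ Q := fun j =>
        hQi (Finset.mem_union_left _ (Finset.mem_image_of_mem _ (Finset.mem_univ j)))
      have hw'Q : ∀ j, w' j ∈ Q := fun j =>
        hQi (Finset.mem_union_right _ (Finset.mem_image_of_mem _ (Finset.mem_univ j)))
      have heq := hom k hk (fun j => h (w j)) (fun j => h (w' j))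
        (fun j j' hjj => hmono _ (hwQ j) _ (hwQ j') (hw hjj))
        (fun j j' hjj => hmono _ (hw'Q j) _ (hw'Q j') (hw' hjj))
        (fun j => hmem' _) (fun j => hmem' _)
      exact iff_of_eq (congrFun heq s)
    · obtain ⟨k, ⟨s, hs⟩, ⟨w, hw⟩⟩ := x
      have hwQ : ∀ j, w j ∈ Q := fun j =>
        hQi (Finset.mem_image_of_mem _ (Finset.mem_univ j))
      suffices hgoal : ∃ x : Fin n → M, ∀ j,
          (φ.Realize (Sum.elim x (b (h (w j)))) ↔ s j = true) by
        show (patternExists _ _ _ _).Realize _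
        rw [realize_patternExists]
        exact hgoal
      by_cases hall : ∀ j, s j = true
      · refine ⟨a 0, fun j => ?_⟩
        rw [hall j]
        simpa [hab] using hpos (w j)
      · push_neg at hall
        obtain ⟨j₁, hj₁⟩ := hall
        have hne : (Finset.univ.filter (fun j => s j = false)).Nonempty :=
          ⟨j₁, by simp [Finset.mem_filter]; simpa using hj₁⟩
        set j₀ := (Finset.univ.filter (fun j => s j = false)).max' hne with hj₀def
        have hj₀ : s j₀ = false := by
          have := (Finset.univ.filter (fun j => s j = false)).max'_mem hne
          simpa [Finset.mem_filter] using this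
        have hmax : ∀ j, s j = false → j ≤ j₀ := fun j hj =>
          Finset.le_max' _ j (by simp [Finset.mem_filter, hj])
        refine ⟨a (h (w j₀)), fun j => ?_⟩
        rw [hab]
        cases hsj : s j with
        | true =>
          have hjj : j₀ < j := by
            rcases lt_or_ge j₀ j with h' | h'
            · exact h'
            · exfalso
              have := hs h'
              rw [hsj, hj₀] at this
              exact absurd this (by decide)
          simpa using hmono _ (hwQ j₀) _ (hwQ j) (hw hjj)
        | false =>
          have hjj : j ≤ j₀ := hmax j hsj
          have hnl : ¬ (h (w j₀) < h (w j)) := by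
            rcases lt_or_eq_of_le hjj with h' | h'
            · exact not_lt.2 (le_of_lt (hmono _ (hwQ j) _ (hwQ j₀) (hw h')))
            · subst h'; exact lt_irrefl _
          simp [hnl]
  obtain ⟨N, c, hc⟩ := exists_model_realize F₁ M hfin
  refine ⟨N, fun q y => c ⟨(q, y)⟩, ?_, ?_⟩
  · intro k s w w' hw hw'
    have := hc (Sum.inl ⟨k, s, ⟨w, hw⟩, ⟨w', hw'⟩⟩)
    rw [hF₁] at this
    dsimp only at this
    rw [Formula.realize_iff, realize_patternExists, realize_patternExists] at this
    exact this
  · intro k s w hs hw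
    have := hc (Sum.inr ⟨k, ⟨s, hs⟩, ⟨w, hw⟩⟩)
    rw [hF₁] at this
    dsimp only at this
    rw [realize_patternExists] at this
    exact this





variable {L : FirstOrder.Language.{u, u}} {T : L.Theory} {n m : ℕ}

lemma bool_ne_iff {b c : Bool} (h : b ≠ c) : c = !b := by
  cases b <;> cases c <;> simp_all

lemma bool_not_iff_aux {X : Prop} {b : Bool} (h : ¬ (X ↔ b = true)) : X ↔ (!b) = true := by
  cases b <;> simp_all <;> tauto

theorem part_sop (φ : L.Formula (Fin n ⊕ Fin m)) (N : Theory.ModelType.{u, u, u} T)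
    (bb : ℚ → Fin m → N)
    (P1 : ∀ (k : ℕ) (s : Fin k → Bool) (w w' : Fin k → ℚ), StrictMono w → StrictMono w' →
      ((∃ x : Fin n → N, ∀ j, (φ.Realize (Sum.elim x (bb (w j))) ↔ s j = true)) ↔
       (∃ x : Fin n → N, ∀ j, (φ.Realize (Sum.elim x (bb (w' j))) ↔ s j = true))))
    (K : ℕ) (s : Fin (K+1) → Bool) (i : ℕ) (h1 : i + 1 < K + 1)
    (hP : ∃ x : Fin n → N, ∀ j : Fin (K+1),
      (φ.Realize (Sum.elim x (bb ((j : ℕ) : ℚ))) ↔ s j = true))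
    (hnP : ¬ ∃ x : Fin n → N, ∀ j : Fin (K+1), (φ.Realize (Sum.elim x (bb ((j : ℕ) : ℚ))) ↔
      (s ∘ Equiv.swap (⟨i, by omega⟩ : Fin (K+1)) ⟨i+1, h1⟩) j = true))
    (hne : s ⟨i, by omega⟩ ≠ s ⟨i+1, h1⟩) :
    ∃ (m₂ : ℕ) (χ : L.Formula (Fin n ⊕ Fin m₂)) (B : ℕ → Fin m₂ → N),
      ∀ i' j' : ℕ, i' < j' →
        {x : Fin n → N | χ.Realize (Sum.elim x (B i'))} ⊂
          {x : Fin n → N | χ.Realize (Sum.elim x (B j'))} := by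
  classical
  have hiK : i < K := by omega
  set p : Fin (K+1) := ⟨i, by omega⟩ with hp
  set q : Fin (K+1) := ⟨i+1, h1⟩ with hq
  -- base pattern of length K: s with slot i+1 deleted
  set embd : Fin K → Fin (K+1) := fun j =>
    if (j : ℕ) ≤ i then ⟨j, by omega⟩ else ⟨(j : ℕ) + 1, by omega⟩ with hembd
  set r : Fin K → Bool := fun j => s (embd j) with hr
  set pos : ℚ → Fin K → ℚ := fun t j =>
    if (j : ℕ) < i then ((j : ℕ) : ℚ) else if (j : ℕ) = i then t else ((j : ℕ) : ℚ) + 1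
    with hposdef
  set W : ℚ → ℚ → Fin (K+1) → ℚ := fun t t' j =>
    if (j : ℕ) < i then ((j : ℕ) : ℚ) else if (j : ℕ) = i then t
    else if (j : ℕ) = i + 1 then t' else ((j : ℕ) : ℚ) with hWdef
  set D : ℚ → Set (Fin n → N) := fun t =>
    {x | ∀ j : Fin K, (φ.Realize (Sum.elim x (bb (pos t j))) ↔ r j = true)} with hD
  -- swap basics
  have hswap_ne : ∀ jj : Fin (K+1), jj ≠ p → jj ≠ q →
      (s ∘ Equiv.swap p q) jj = s jj := fun jj hh hh' => by
    simp [Function.comp_apply, Equiv.swap_apply_of_ne_of_ne hh hh']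
  have hswap_p : (s ∘ Equiv.swap p q) p = s q := by simp
  have hswap_q : (s ∘ Equiv.swap p q) q = s p := by simp
  have hsq : s q = ! s p := bool_ne_iff hne
  -- r values
  have hr_le : ∀ (j : Fin K), (j : ℕ) ≤ i → r j = s ⟨(j : ℕ), by omega⟩ := by
    intro j hj
    rw [hr]
    simp only [hembd, if_pos hj]
  have hr_gt : ∀ (j : Fin K), i < (j : ℕ) → r j = s ⟨(j : ℕ) + 1, by omega⟩ := by
    intro j hj
    rw [hr]
    simp only [hembd, if_neg (by omega : ¬ (j : ℕ) ≤ i)]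
  -- pos values
  have hpos_lt : ∀ t (j : Fin K), (j : ℕ) < i → pos t j = ((j : ℕ) : ℚ) := by
    intro t j hj; rw [hposdef]; simp only [if_pos hj]
  have hpos_eq : ∀ t (j : Fin K), (j : ℕ) = i → pos t j = t := by
    intro t j hj; rw [hposdef]; simp only [if_neg (by omega : ¬ (j : ℕ) < i), if_pos hj]
  have hpos_gt : ∀ t (j : Fin K), i < (j : ℕ) → pos t j = ((j : ℕ) : ℚ) + 1 := by
    intro t j hj
    rw [hposdef]
    simp only [if_neg (by omega : ¬ (j : ℕ) < i), if_neg (by omega : ¬ (j : ℕ) = i)]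
  -- W values
  have hW_lt : ∀ t t' (jj : Fin (K+1)), (jj : ℕ) < i → W t t' jj = ((jj : ℕ) : ℚ) := by
    intro t t' jj hj; rw [hWdef]; simp only [if_pos hj]
  have hW_i : ∀ t t' (jj : Fin (K+1)), (jj : ℕ) = i → W t t' jj = t := by
    intro t t' jj hj
    rw [hWdef]; simp only [if_neg (by omega : ¬ (jj : ℕ) < i), if_pos hj]
  have hW_i1 : ∀ t t' (jj : Fin (K+1)), (jj : ℕ) = i + 1 → W t t' jj = t' := by
    intro t t' jj hj
    rw [hWdef]
    simp only [if_neg (by omega : ¬ (jj : ℕ) < i), if_neg (by omega : ¬ (jj : ℕ) = i),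
      if_pos hj]
  have hW_gt : ∀ t t' (jj : Fin (K+1)), i + 1 < (jj : ℕ) → W t t' jj = ((jj : ℕ) : ℚ) := by
    intro t t' jj hj
    rw [hWdef]
    simp only [if_neg (by omega : ¬ (jj : ℕ) < i), if_neg (by omega : ¬ (jj : ℕ) = i),
      if_neg (by omega : ¬ (jj : ℕ) = i + 1)]
  -- monotonicity of W
  have hWmono : ∀ t t', ((i : ℚ) - 1 < t) → (t < t') → (t' < (i : ℚ) + 2) →
      StrictMono (W t t') := by
    intro t t' hta htb htc jj jj' hlt
    have hv : (jj : ℕ) < (jj' : ℕ) := hlt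
    rcases lt_trichotomy ((jj : ℕ)) i with ha | ha | ha
    · rw [hW_lt t t' jj ha]
      have hcast : ((jj : ℕ) : ℚ) + 1 ≤ (i : ℚ) := by exact_mod_cast ha
      rcases lt_trichotomy ((jj' : ℕ)) i with hb | hb | hb
      · rw [hW_lt t t' jj' hb]; exact_mod_cast hv
      · rw [hW_i t t' jj' hb]; linarith
      · rcases eq_or_lt_of_le (by omega : i + 1 ≤ (jj' : ℕ)) with hb' | hb'
        · rw [hW_i1 t t' jj' hb'.symm]; linarith
        · rw [hW_gt t t' jj' hb']; exact_mod_cast hv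
    · rw [hW_i t t' jj ha]
      rcases lt_trichotomy ((jj' : ℕ)) (i+1) with hb | hb | hb
      · omega
      · rw [hW_i1 t t' jj' hb]; exact htb
      · rw [hW_gt t t' jj' hb]
        have hcast : (i : ℚ) + 2 ≤ ((jj' : ℕ) : ℚ) := by exact_mod_cast (by omega : i + 2 ≤ (jj' : ℕ))
        linarith
    · have ha' : i + 1 ≤ (jj : ℕ) := ha
      rcases eq_or_lt_of_le ha' with hc | hc
      · rw [hW_i1 t t' jj hc.symm]
        rcases lt_trichotomy ((jj' : ℕ)) (i+2) with hb | hb | hb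
        · omega
        · rw [hW_gt t t' jj' (by omega)]
          have hcast : (i : ℚ) + 2 ≤ ((jj' : ℕ) : ℚ) := by exact_mod_cast (by omega : i + 2 ≤ (jj' : ℕ))
          linarith
        · rw [hW_gt t t' jj' (by omega)]
          have hcast : (i : ℚ) + 2 ≤ ((jj' : ℕ) : ℚ) := by exact_mod_cast (by omega : i + 2 ≤ (jj' : ℕ))
          linarith
      · rw [hW_gt t t' jj hc, hW_gt t t' jj' (by omega)]
        exact_mod_cast hv
  have hcanon : ∀ k : ℕ, StrictMono (fun j : Fin k => ((j : ℕ) : ℚ)) := by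
    intro k j j' hjj
    show ((j : ℕ) : ℚ) < ((j' : ℕ) : ℚ)
    have : (j : ℕ) < (j' : ℕ) := hjj
    exact_mod_cast this
  -- (A) inclusion
  have hsub : ∀ t t', ((i : ℚ) - 1 < t) → (t < t') → (t' < (i : ℚ) + 2) → D t' ⊆ D t := by
    intro t t' hta htb htc x hx
    intro j
    by_cases hji : (j : ℕ) = i
    swap
    · have hpp : pos t j = pos t' j := by
        rcases lt_trichotomy ((j : ℕ)) i with hc | hc | hc
        · rw [hpos_lt t _ hc, hpos_lt t' _ hc]
        · exact absurd hc hji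
        · rw [hpos_gt t _ hc, hpos_gt t' _ hc]
      rw [hpp]
      exact hx j
    · by_contra hcon
      -- x realizes the swapped pattern along W t t'
      apply hnP
      rw [← P1 (K+1) (s ∘ Equiv.swap p q) (W t t') (fun j => ((j : ℕ) : ℚ))
        (hWmono t t' hta htb htc) (hcanon (K+1))]
      refine ⟨x, fun jj => ?_⟩
      rcases lt_trichotomy ((jj : ℕ)) i with hc | hc | hc
      · -- below i
        have hfin : ((jj : ℕ) : ℕ) < K := by omega
        have hbase := hx ⟨(jj : ℕ), by omega⟩
        rw [hpos_lt t' _ (by simpa using hc)] at hbase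
        rw [hW_lt t t' jj hc]
        rw [hswap_ne jj (by rw [hp]; exact fun hh => by simp [Fin.ext_iff] at hh; omega)
          (by rw [hq]; exact fun hh => by simp [Fin.ext_iff] at hh; omega)]
        have : r ⟨(jj : ℕ), by omega⟩ = s jj := by
          rw [hr_le _ (by simpa using le_of_lt hc)]
        rw [← this]
        exact hbase
      · -- at i : use the failed constraint
        have hjeq : j = ⟨i, by omega⟩ := by
          apply Fin.ext; simpa using hji
        have hfail : φ.Realize (Sum.elim x (bb t)) ↔ (! (r j)) = true := by
          apply bool_not_iff_aux
          rw [← hpos_eq t j hji]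
          exact hcon
        rw [hW_i t t' jj hc]
        have hjjp : jj = p := by apply Fin.ext; simpa using hc
        rw [hjjp, hswap_p, hsq]
        have hrj : r j = s p := by
          rw [hr_le _ (by omega : (j : ℕ) ≤ i)]
          congr 1
          apply Fin.ext
          simpa using hji
        rw [← hrj]
        exact hfail
      · rcases eq_or_lt_of_le (by omega : i + 1 ≤ (jj : ℕ)) with hc' | hc'
        · -- at i+1 : use the t'-constraint of slot i
          have hbase := hx ⟨i, hiK⟩
          rw [hpos_eq t' _ (by simp)] at hbase
          rw [hW_i1 t t' jj hc'.symm]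
          have hjjq : jj = q := by apply Fin.ext; simpa using hc'.symm
          rw [hjjq, hswap_q]
          have hrj : r (⟨i, hiK⟩ : Fin K) = s p := by
            rw [hr_le _ (by simp)]
          rw [← hrj]
          exact hbase
        · -- above i+1
          have hfin : (jj : ℕ) - 1 < K := by omega
          have hbase := hx ⟨(jj : ℕ) - 1, hfin⟩
          rw [hpos_gt t' _ (by simp; omega)] at hbase
          have hcast : ((((jj : ℕ) - 1 : ℕ)) : ℚ) + 1 = ((jj : ℕ) : ℚ) := by
            have : ((jj : ℕ) - 1) + 1 = (jj : ℕ) := by omega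
            exact_mod_cast congrArg (Nat.cast : ℕ → ℚ) this
          rw [hcast] at hbase
          rw [hW_gt t t' jj hc']
          rw [hswap_ne jj (by rw [hp]; exact fun hh => by simp [Fin.ext_iff] at hh; omega)
            (by rw [hq]; exact fun hh => by simp [Fin.ext_iff] at hh; omega)]
          have : r ⟨(jj : ℕ) - 1, hfin⟩ = s jj := by
            rw [hr_gt _ (by simp; omega)]
            congr 1
            apply Fin.ext
            simp
            omega
          rw [← this]
          exact hbase
  -- (B) strictness
  have hstrict : ∀ t t', ((i : ℚ) - 1 < t) → (t < t') → (t' < (i : ℚ) + 2) →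
      ∃ x, x ∈ D t ∧ x ∉ D t' := by
    intro t t' hta htb htc
    have hreal : ∃ x : Fin n → N, ∀ jj, (φ.Realize (Sum.elim x (bb (W t t' jj))) ↔
        s jj = true) := by
      rw [P1 (K+1) s (W t t') (fun j => ((j : ℕ) : ℚ)) (hWmono t t' hta htb htc) (hcanon (K+1))]
      exact hP
    obtain ⟨x, hxw⟩ := hreal
    refine ⟨x, ?_, ?_⟩
    · intro j
      rcases lt_trichotomy ((j : ℕ)) i with hc | hc | hc
      · have hjj := hxw ⟨(j : ℕ), by omega⟩
        rw [hW_lt t t' _ (by simpa using hc)] at hjj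
        rw [hpos_lt t _ hc, hr_le _ (le_of_lt hc)]
        exact hjj
      · have hjj := hxw ⟨i, by omega⟩
        rw [hW_i t t' _ (by simp)] at hjj
        rw [hpos_eq t _ hc, hr_le _ (by omega)]
        have : (⟨(j : ℕ), by omega⟩ : Fin (K+1)) = ⟨i, by omega⟩ := by
          apply Fin.ext; simpa using hc
        rw [this]
        exact hjj
      · have hfin : (j : ℕ) + 1 < K + 1 := by omega
        have hjj := hxw ⟨(j : ℕ) + 1, hfin⟩
        rw [hW_gt t t' _ (by simp; omega)] at hjj
        rw [hpos_gt t _ hc, hr_gt _ hc]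
        have hcast : ((((j : ℕ) + 1 : ℕ)) : ℚ) = ((j : ℕ) : ℚ) + 1 := by push_cast; ring
        rw [hcast] at hjj
        exact hjj
    · intro hmem
      have h1' := hmem ⟨i, hiK⟩
      rw [hpos_eq t' _ (by simp), hr_le _ (by simp)] at h1'
      have h2' := hxw q
      rw [hW_i1 t t' q (by simp [hq])] at h2'
      rw [hsq] at h2'
      have hpe : (⟨(((⟨i, hiK⟩ : Fin K) : ℕ)), by omega⟩ : Fin (K+1)) = p := by
        apply Fin.ext; simp [hp]
      rw [hpe] at h1'
      rw [h1'] at h2'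
      cases hval : s p <;> rw [hval] at h2' <;> simp at h2'
  -- the decreasing sequence of parameters
  set tseq : ℕ → ℚ := fun nn => (i : ℚ) + 1 / ((nn : ℚ) + 1) with htseq
  have htmem : ∀ nn : ℕ, ((i : ℚ) - 1 < tseq nn) ∧ (tseq nn < (i : ℚ) + 2) := by
    intro nn
    have h0 : (0 : ℚ) < (nn : ℚ) + 1 := by positivity
    have hle : 1 / ((nn : ℚ) + 1) ≤ 1 := by
      rw [div_le_one h0]; linarith [Nat.cast_nonneg (α := ℚ) nn]
    have hpos' : 0 < 1 / ((nn : ℚ) + 1) := by positivity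
    constructor <;> (rw [htseq]; dsimp only) <;> linarith
  have htdec : ∀ a b : ℕ, a < b → tseq b < tseq a := by
    intro a b hab
    rw [htseq]
    dsimp only
    have h0a : (0 : ℚ) < (a : ℚ) + 1 := by positivity
    have h0b : (0 : ℚ) < (b : ℚ) + 1 := by positivity
    have : 1 / ((b : ℚ) + 1) < 1 / ((a : ℚ) + 1) := by
      apply one_div_lt_one_div_of_lt h0a
      have : (a : ℚ) < (b : ℚ) := by exact_mod_cast hab
      linarith
    linarith
  -- package as formula with parameters
  refine ⟨m * K, (patternFormula φ K r).relabel
    (Sum.map id fun pr : Fin K × Fin m => (finProdFinEquiv (pr.2, pr.1) : Fin (m * K))),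
    fun nn e => bb (pos (tseq nn) (finProdFinEquiv.symm e).2) (finProdFinEquiv.symm e).1,
    ?_⟩
  have hsets : ∀ nn : ℕ, {x : Fin n → N |
      ((patternFormula φ K r).relabel
        (Sum.map id fun pr : Fin K × Fin m => (finProdFinEquiv (pr.2, pr.1) : Fin (m * K)))).Realize
        (Sum.elim x (fun e => bb (pos (tseq nn) (finProdFinEquiv.symm e).2)
          (finProdFinEquiv.symm e).1))} = D (tseq nn) := by
    intro nn
    ext x
    rw [Set.mem_setOf_eq, Formula.realize_relabel, realize_patternFormula]
    apply forall_congr'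
    intro j
    have harg : ((Sum.elim x fun e => bb (pos (tseq nn) (finProdFinEquiv.symm e).2)
        (finProdFinEquiv.symm e).1) ∘
          (Sum.map id fun pr : Fin K × Fin m => (finProdFinEquiv (pr.2, pr.1) : Fin (m * K)))) ∘
            (Sum.map id fun y => (j, y)) = Sum.elim x (bb (pos (tseq nn) j)) := by
      funext aa
      rcases aa with aa | aa
      · rfl
      · show bb (pos (tseq nn) (finProdFinEquiv.symm (finProdFinEquiv (aa, j))).2)
          (finProdFinEquiv.symm (finProdFinEquiv (aa, j))).1 = bb (pos (tseq nn) j) aa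
        rw [Equiv.symm_apply_apply]
    rw [harg]
  intro i' j' hij
  rw [hsets i', hsets j']
  have hsub' : D (tseq i') ⊆ D (tseq j') :=
    hsub (tseq j') (tseq i') (htmem j').1 (htdec i' j' hij) (htmem i').2
  obtain ⟨x, hx1, hx2⟩ := hstrict (tseq j') (tseq i') (htmem j').1 (htdec i' j' hij) (htmem i').2
  rw [Set.ssubset_iff_of_subset hsub']
  exact ⟨x, hx1, hx2⟩





variable {L : FirstOrder.Language.{u, u}} {T : L.Theory} {n m : ℕ}

lemma canonMono (k : ℕ) : StrictMono (fun j : Fin k => ((j : ℕ) : ℚ)) := by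
  intro j j' hjj
  show ((j : ℕ) : ℚ) < ((j' : ℕ) : ℚ)
  have : (j : ℕ) < (j' : ℕ) := hjj
  exact_mod_cast this

theorem part_ip (φ : L.Formula (Fin n ⊕ Fin m)) (N : Theory.ModelType.{u, u, u} T)
    (bb : ℚ → Fin m → N)
    (hall : ∀ (k : ℕ) (s : Fin k → Bool),
      ∃ x : Fin n → N, ∀ j : Fin k, (φ.Realize (Sum.elim x (bb ((j : ℕ) : ℚ))) ↔ s j = true)) :
    ∃ (n' m' : ℕ) (ψ : L.Formula (Fin n' ⊕ Fin m'))
      (N₂ : Theory.ModelType.{u, u, u} T) (aa : ℕ → Fin n' → N₂),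
      ∀ S : Set ℕ, ∃ bS : Fin m' → N₂, ∀ i : ℕ, ψ.Realize (Sum.elim (aa i) bS) ↔ i ∈ S := by
  classical
  set α₂ : Type u := ULift.{u} ((ℕ × Fin m) ⊕ (Set ℕ × Fin n)) with hα₂
  set ρ : ℕ → Set ℕ → (Fin n ⊕ Fin m → α₂) := fun i S =>
    Sum.elim (fun xx => ⟨Sum.inr (S, xx)⟩) (fun y => ⟨Sum.inl (i, y)⟩) with hρ
  set F₂ : ℕ × Set ℕ → L.Formula α₂ := fun iS =>
    if iS.1 ∈ iS.2 then φ.relabel (ρ iS.1 iS.2) else (φ.relabel (ρ iS.1 iS.2)).not with hF₂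
  have hfin : ∀ s₀ : Finset (ℕ × Set ℕ), ∃ v : α₂ → N, ∀ i ∈ s₀, (F₂ i).Realize v := by
    intro s₀
    set k : ℕ := s₀.sup (fun iS => iS.1) + 1 with hk
    have hz : ∀ S : Set ℕ, ∃ x : Fin n → N, ∀ j : Fin k,
        (φ.Realize (Sum.elim x (bb ((j : ℕ) : ℚ))) ↔ (decide ((j : ℕ) ∈ S)) = true) :=
      fun S => hall k _
    choose zf hzf using hz
    refine ⟨fun pr => Sum.rec (fun ab => bb ((ab.1 : ℕ) : ℚ) ab.2)
      (fun ab => zf ab.1 ab.2) pr.down, ?_⟩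
    rintro ⟨i, S⟩ hiS
    have hik : i < k := by
      have hle : i ≤ s₀.sup (fun iS : ℕ × Set ℕ => iS.1) := by
        simpa using Finset.le_sup (f := fun iS : ℕ × Set ℕ => iS.1) hiS
      omega
    have hspec := hzf S ⟨i, hik⟩
    rw [decide_eq_true_iff] at hspec
    rw [hF₂]
    dsimp only
    have harg : ((fun pr : α₂ => Sum.rec (fun ab => bb ((ab.1 : ℕ) : ℚ) ab.2)
        (fun ab => zf ab.1 ab.2) pr.down) ∘ ρ i S) =
        Sum.elim (zf S) (bb ((i : ℕ) : ℚ)) := by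
      funext pp
      rcases pp with xx | y <;> rfl
    by_cases hIS : i ∈ S
    · rw [if_pos hIS, Formula.realize_relabel, harg]
      exact hspec.2 hIS
    · rw [if_neg hIS]
      show ¬ (φ.relabel (ρ i S)).Realize _
      rw [Formula.realize_relabel, harg]
      exact fun hcon => hIS (hspec.1 hcon)
  obtain ⟨N₂, c₂, h₂⟩ := exists_model_realize F₂ N hfin
  refine ⟨m, n, φ.relabel (Sum.elim Sum.inr Sum.inl), N₂,
    fun i y => c₂ ⟨Sum.inl (i, y)⟩, ?_⟩
  intro S
  refine ⟨fun xx => c₂ ⟨Sum.inr (S, xx)⟩, fun i => ?_⟩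
  have h := h₂ (i, S)
  rw [Formula.realize_relabel]
  have harg : ((Sum.elim ((fun i y => c₂ ⟨Sum.inl (i, y)⟩) i)
      fun xx => c₂ ⟨Sum.inr (S, xx)⟩) ∘ Sum.elim Sum.inr Sum.inl) = c₂ ∘ ρ i S := by
    funext pp
    rcases pp with xx | y <;> rfl
  rw [harg]
  by_cases hIS : i ∈ S
  · rw [hF₂] at h
    dsimp only at h
    rw [if_pos hIS, Formula.realize_relabel] at h
    exact iff_of_true h hIS
  · rw [hF₂] at h
    dsimp only at h
    rw [if_neg hIS] at h
    have h' : ¬ (φ.relabel (ρ i S)).Realize c₂ := h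
    rw [Formula.realize_relabel] at h'
    exact iff_of_false h' hIS

end ShelahAux

open FirstOrder Cardinal

/-- `T` has the independence property: for some formula `ψ(x̄, ȳ)`, some model `M` of `T`
and tuples `āᵢ` (`i < ω`), every subset `S ⊆ ω` is cut out by some parameter `b̄_S`:
`M ⊨ ψ(āᵢ, b̄_S)` iff `i ∈ S`. -/
def FirstOrder.Language.Theory.HasIndependenceProperty {L : FirstOrder.Language.{u, u}}
    (T : L.Theory) : Prop :=
  ∃ (n m : ℕ) (ψ : L.Formula (Fin n ⊕ Fin m))
    (M : FirstOrder.Language.Theory.ModelType.{u, u, u} T)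
    (a : ℕ → Fin n → M),
    ∀ S : Set ℕ, ∃ b : Fin m → M, ∀ i : ℕ, ψ.Realize (Sum.elim (a i) b) ↔ i ∈ S

/-- `T` has the strict order property: for some formula `χ(x̄, ȳ)`, some model `M` of `T`
and parameters `b̄ₙ` (`n < ω`), the definable sets `χ(M, b̄ₙ)` form a strictly increasing
chain under inclusion. -/
def FirstOrder.Language.Theory.HasStrictOrderProperty {L : FirstOrder.Language.{u, u}}
    (T : L.Theory) : Prop :=
  ∃ (n m : ℕ) (χ : L.Formula (Fin n ⊕ Fin m))
    (M : FirstOrder.Language.Theory.ModelType.{u, u, u} T)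
    (b : ℕ → Fin m → M),
    ∀ i j : ℕ, i < j →
      {x : Fin n → M | χ.Realize (Sum.elim x (b i))} ⊂
        {x : Fin n → M | χ.Realize (Sum.elim x (b j))}

/-- A complete theory is unstable (some formula has the order property) if and only if some
formula has the independence property or some formula has the strict order property. -/
theorem unstable_iff_independence_or_strictOrder {L : FirstOrder.Language.{u, u}}
    (T : L.Theory) (hT : T.IsComplete) :
    T.HasOrderProperty ↔ T.HasIndependenceProperty ∨ T.HasStrictOrderProperty := by
  constructor
  · rintro ⟨n, m, φ, M, a, b, hab⟩
    obtain ⟨N, bb, P1, P2⟩ := ShelahAux.exists_homogeneous φ M a b hab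
    by_cases hcrit : ∃ (k : ℕ) (s : Fin k → Bool) (i : ℕ) (h1 : i + 1 < k),
        (∃ x : Fin n → N, ∀ j : Fin k,
          (φ.Realize (Sum.elim x (bb ((j : ℕ) : ℚ))) ↔ s j = true)) ∧
        ¬ (∃ x : Fin n → N, ∀ j : Fin k, (φ.Realize (Sum.elim x (bb ((j : ℕ) : ℚ))) ↔
          (s ∘ Equiv.swap (⟨i, by omega⟩ : Fin k) ⟨i+1, h1⟩) j = true))
    swap
    · left
      have hcl : ∀ (k : ℕ) (s : Fin k → Bool) (i : ℕ) (h1 : i + 1 < k),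
          (∃ x : Fin n → N, ∀ j : Fin k,
            (φ.Realize (Sum.elim x (bb ((j : ℕ) : ℚ))) ↔ s j = true)) →
          (∃ x : Fin n → N, ∀ j : Fin k, (φ.Realize (Sum.elim x (bb ((j : ℕ) : ℚ))) ↔
            (s ∘ Equiv.swap (⟨i, by omega⟩ : Fin k) ⟨i+1, h1⟩) j = true)) := by
        intro k s i h1 hA
        by_contra hB
        exact hcrit ⟨k, s, i, h1, hA, hB⟩
      have hall := ShelahAux.all_of_closed
        (fun {k} s => ∃ x : Fin n → N, ∀ j : Fin k,
          (φ.Realize (Sum.elim x (bb ((j : ℕ) : ℚ))) ↔ s j = true))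
        (fun k s hs => P2 k s _ hs (ShelahAux.canonMono k)) hcl
      exact ShelahAux.part_ip φ N bb hall
    · right
      obtain ⟨k, s, i, h1, hP, hnP⟩ := hcrit
      obtain ⟨K, rfl⟩ : ∃ K, k = K + 1 := ⟨k - 1, by omega⟩
      have hne : s ⟨i, by omega⟩ ≠ s ⟨i + 1, h1⟩ := by
        intro heq
        apply hnP
        have hfix : s ∘ Equiv.swap (⟨i, by omega⟩ : Fin (K+1)) ⟨i+1, h1⟩ = s := by
          funext x
          rcases eq_or_ne x (⟨i, by omega⟩ : Fin (K+1)) with rfl | hxp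
          · simpa [Equiv.swap_apply_left] using heq.symm
          · rcases eq_or_ne x (⟨i+1, h1⟩ : Fin (K+1)) with rfl | hxq
            · simpa [Equiv.swap_apply_right] using heq
            · simp [Equiv.swap_apply_of_ne_of_ne hxp hxq]
        rw [hfix]
        exact hP
      obtain ⟨m₂, χ, B, hB⟩ := ShelahAux.part_sop φ N bb P1 K s i h1 hP hnP hne
      exact ⟨n, m₂, χ, N, B, hB⟩
  · rintro (⟨n, m, ψ, M, a, hS⟩ | ⟨n, m, χ, M, bseq, hchain⟩)
    · refine ⟨n, m, ψ, M, a, fun j => (hS (Set.Iio j)).choose, fun i j => ?_⟩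
      have := (hS (Set.Iio j)).choose_spec i
      simpa using this
    · have hchain' : ∀ j k : ℕ, j ≤ k →
          {x : Fin n → M | χ.Realize (Sum.elim x (bseq j))} ⊆
          {x : Fin n → M | χ.Realize (Sum.elim x (bseq k))} := by
        intro j k hjk
        rcases lt_or_eq_of_le hjk with h | h
        · exact (hchain j k h).1
        · subst h; exact le_refl _
      have hex : ∀ i : ℕ, ∃ x : Fin n → M, χ.Realize (Sum.elim x (bseq (i+1))) ∧
          ¬ χ.Realize (Sum.elim x (bseq i)) := by
        intro i
        obtain ⟨x, hx1, hx2⟩ := Set.exists_of_ssubset (hchain i (i+1) (by omega))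
        exact ⟨x, hx1, hx2⟩
      choose aa ha1 ha2 using hex
      refine ⟨n, m, χ, M, aa, bseq, fun i j => ?_⟩
      constructor
      · intro hr
        by_contra hij
        push_neg at hij
        exact ha2 i (hchain' j i hij hr)
      · intro hij
        exact hchain' (i+1) j (by omega) (ha1 i)
end
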